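/- arXiv:2502.11152 — 5 statements merged into one kernel-verified Lean document; each statement's English description precedes it below -/
import Mathlib

section
/- Let a > 0, let Σ be an n×n real diagonal matrix, and let Q be an n×n orthogonal matrix. If the spectral norm of Σ − aI is at most a/2, then ‖QΣ² − Σ²Q‖_F ≥ a·‖QΣ − ΣQ‖_F. -/
open Matrix
/-- Frobenius norm of a real matrix. -/
noncomputable def frob {m n : Type*} [Fintype m] [Fintype n] (A : Matrix m n ℝ) : ℝ :=
  Real.sqrt (∑ i, ∑ j, (A i j) ^ 2)

/-- Spectral (operator ℓ²→ℓ²) norm of a real matrix. -/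
noncomputable def spec {m n : Type*} [Fintype m] [Fintype n] [DecidableEq n] (A : Matrix m n ℝ) : ℝ :=
  ‖LinearMap.toContinuousLinearMap (Matrix.toEuclideanLin A)‖

/-- if `Σ` is diagonal, `Q` orthogonal and `‖Σ − aI‖ ≤ a/2` with `a > 0`,
then `‖QΣ² − Σ²Q‖_F ≥ a‖QΣ − ΣQ‖_F`. -/
theorem stmt0 (n : ℕ) (a : ℝ) (ha : 0 < a)
    (S Q : Matrix (Fin n) (Fin n) ℝ) (hS : S.IsDiag) (hQ : Qᵀ * Q = 1)
    (hnear : spec (S - a • (1 : Matrix (Fin n) (Fin n) ℝ)) ≤ a / 2) :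
    frob (Q * S ^ 2 - S ^ 2 * Q) ≥ a * frob (Q * S - S * Q) := by
  -- diagonal entries
  set d : Fin n → ℝ := fun i => S i i with hd
  -- each diagonal entry is close to a
  have hdi : ∀ i, |d i - a| ≤ a / 2 := by
    intro i
    set A : Matrix (Fin n) (Fin n) ℝ := S - a • (1 : Matrix (Fin n) (Fin n) ℝ) with hA
    set L := LinearMap.toContinuousLinearMap (Matrix.toEuclideanLin A) with hL
    set v : EuclideanSpace ℝ (Fin n) := EuclideanSpace.single i 1 with hv
    have hnormv : ‖v‖ = 1 := by simp [hv]
    have hle : ‖L v‖ ≤ spec A := by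
      calc ‖L v‖ ≤ ‖L‖ * ‖v‖ := L.le_opNorm v
      _ = spec A := by rw [hnormv, mul_one]; rfl
    have hcomp : |(L v) i| ≤ ‖L v‖ := by
      have := EuclideanSpace.norm_eq (L v)
      rw [this]
      have h1 : |(L v) i| = Real.sqrt (‖(L v) i‖ ^ 2) := by
        rw [Real.sqrt_sq_eq_abs]; simp
      rw [h1]
      apply Real.sqrt_le_sqrt
      exact Finset.single_le_sum (f := fun j => ‖(L v) j‖ ^ 2)
        (fun j _ => sq_nonneg _) (Finset.mem_univ i)
    have hLv : (L v) i = d i - a := by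
      have : L v = Matrix.toEuclideanLin A v := rfl
      rw [this, Matrix.toEuclideanLin_apply]
      have : (A *ᵥ (WithLp.equiv 2 (Fin n → ℝ)) v) i = d i - a := by
        simp only [Matrix.mulVec, dotProduct]
        have hveq : ∀ j, (WithLp.equiv 2 (Fin n → ℝ)) v j = if j = i then 1 else 0 := by
          intro j
          rw [hv]
          exact EuclideanSpace.single_apply i 1 j
        rw [Finset.sum_eq_single i]
        · simp [hA, hveq i, Matrix.one_apply, hd]
        · intro j _ hj; rw [hveq j]; simp [hj]
        · intro h; exact absurd (Finset.mem_univ i) h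
      exact this
    rw [← hLv]
    exact le_trans (hcomp.trans hle) hnear
  have hsum : ∀ i j, a ≤ d i + d j := by
    intro i j
    have h1 := abs_le.mp (hdi i)
    have h2 := abs_le.mp (hdi j)
    linarith [h1.1, h2.1]
  -- entrywise formulas
  have hSdiag : ∀ i j, S i j = if i = j then d i else 0 := by
    intro i j
    by_cases h : i = j
    · simp [h, hd]
    · simp [h, hS h]
  have hE1 : ∀ i j, (Q * S - S * Q) i j = Q i j * (d j - d i) := by
    intro i j
    simp only [Matrix.sub_apply, Matrix.mul_apply]
    rw [Finset.sum_eq_single j, Finset.sum_eq_single i]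
    · rw [hSdiag j j, hSdiag i i]; simp; ring
    · intro k _ hk; rw [hSdiag i k]; simp [Ne.symm hk]
    · intro h; exact absurd (Finset.mem_univ i) h
    · intro k _ hk; rw [hSdiag k j]; simp [hk]
    · intro h; exact absurd (Finset.mem_univ j) h
  have hS2 : ∀ i j, (S ^ 2) i j = if i = j then d i ^ 2 else 0 := by
    intro i j
    rw [sq, Matrix.mul_apply, Finset.sum_eq_single i]
    · rw [hSdiag i i, hSdiag i j]
      by_cases h : i = j <;> simp [h, sq]
    · intro k _ hk; rw [hSdiag i k]; simp [Ne.symm hk]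
    · intro h; exact absurd (Finset.mem_univ i) h
  have hE2 : ∀ i j, (Q * S ^ 2 - S ^ 2 * Q) i j = Q i j * (d j ^ 2 - d i ^ 2) := by
    intro i j
    simp only [Matrix.sub_apply, Matrix.mul_apply]
    rw [Finset.sum_eq_single j, Finset.sum_eq_single i]
    · rw [hS2 j j, hS2 i i]; simp; ring
    · intro k _ hk; rw [hS2 i k]; simp [Ne.symm hk]
    · intro h; exact absurd (Finset.mem_univ i) h
    · intro k _ hk; rw [hS2 k j]; simp [hk]
    · intro h; exact absurd (Finset.mem_univ j) h
  -- entrywise inequality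
  have key : ∀ i j, a ^ 2 * ((Q * S - S * Q) i j) ^ 2 ≤ ((Q * S ^ 2 - S ^ 2 * Q) i j) ^ 2 := by
    intro i j
    rw [hE1, hE2]
    have h := hsum i j
    have hfac : d j ^ 2 - d i ^ 2 = (d j - d i) * (d i + d j) := by ring
    rw [hfac]
    have h0 : 0 ≤ d i + d j := le_trans ha.le h
    nlinarith [sq_nonneg (Q i j * (d j - d i)), mul_self_le_mul_self ha.le h]
  -- sum and take square roots
  unfold frob
  have hsums : a ^ 2 * (∑ i, ∑ j, ((Q * S - S * Q) i j) ^ 2)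
      ≤ ∑ i, ∑ j, ((Q * S ^ 2 - S ^ 2 * Q) i j) ^ 2 := by
    rw [Finset.mul_sum]
    apply Finset.sum_le_sum
    intro i _
    rw [Finset.mul_sum]
    exact Finset.sum_le_sum fun j _ => key i j
  have hnn : 0 ≤ ∑ i, ∑ j, ((Q * S - S * Q) i j) ^ 2 :=
    Finset.sum_nonneg fun i _ => Finset.sum_nonneg fun j _ => sq_nonneg _
  calc a * Real.sqrt (∑ i, ∑ j, ((Q * S - S * Q) i j) ^ 2)
      = Real.sqrt (a ^ 2 * ∑ i, ∑ j, ((Q * S - S * Q) i j) ^ 2) := by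
        rw [Real.sqrt_mul (sq_nonneg a), Real.sqrt_sq ha.le]
    _ ≤ Real.sqrt (∑ i, ∑ j, ((Q * S ^ 2 - S ^ 2 * Q) i j) ^ 2) := Real.sqrt_le_sqrt hsums
end

section
/- Let G(W₁,...,W_L) = ‖W_L⋯W₁ − √λ Y‖_F² + λΣ_{l=1}^L ‖W_l‖_F², where λ = Π_{l=1}^L λ_l with all λ_l > 0, and F(W₁,...,W_L) = ‖W_L⋯W₁ − Y‖_F² + Σ_{l=1}^L λ_l‖W_l‖_F². Then (W₁,...,W_L) is a critical point of F (i.e., ∇F = 0) if and only if (√λ₁ W₁,...,√λ_L W_L) is a critical point of G. -/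
open Matrix

/-- Reindexing cast of a rectangular matrix along equalities of dimensions. -/
def mcast {a b c e : ℕ} (h1 : a = c) (h2 : b = e) (M : Matrix (Fin a) (Fin b) ℝ) :
    Matrix (Fin c) (Fin e) ℝ :=
  Matrix.submatrix M (Fin.cast h1.symm) (Fin.cast h2.symm)

/-- `chain d W i k = W_{i+k-1} * ⋯ * W_{i+1} * W_i` (so `k` consecutive factors starting
at layer `i`; the empty product is the identity). -/
noncomputable def chain (d : ℕ → ℕ) (W : ∀ l : ℕ, Matrix (Fin (d (l + 1))) (Fin (d l)) ℝ)
    (i : ℕ) : (k : ℕ) → Matrix (Fin (d (i + k))) (Fin (d i)) ℝ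
  | 0 => (1 : Matrix (Fin (d i)) (Fin (d i)) ℝ)
  | k + 1 => W (i + k) * chain d W i k

/-- The gradient with respect to the `j`-th weight (0-based) of the loss
`‖W_{L:1} − c·Y‖_F² + ∑_l reg_l ‖W_l‖_F²`, namely
`2·W_{L:j+2}ᵀ (W_{L:1} − c Y) W_{j:1}ᵀ + 2 reg_j W_j`. -/
noncomputable def gradReg (d : ℕ → ℕ) (L : ℕ)
    (W : ∀ l : ℕ, Matrix (Fin (d (l + 1))) (Fin (d l)) ℝ)
    (reg : ℕ → ℝ) (c : ℝ) (Y : Matrix (Fin (d L)) (Fin (d 0)) ℝ)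
    (j : ℕ) (hj : j < L) : Matrix (Fin (d (j + 1))) (Fin (d j)) ℝ :=
  (2 : ℝ) • ((mcast (congrArg d (by omega : j + 1 + (L - 1 - j) = L)) rfl
      (chain d W (j + 1) (L - 1 - j)))ᵀ *
    (mcast (congrArg d (Nat.zero_add L)) rfl (chain d W 0 L) - c • Y) *
    (mcast (congrArg d (Nat.zero_add j)) rfl (chain d W 0 j))ᵀ) + (2 * reg j) • W j

/-- Frobenius norm of the full gradient of the loss above. -/
noncomputable def gradNorm (d : ℕ → ℕ) (L : ℕ)
    (W : ∀ l : ℕ, Matrix (Fin (d (l + 1))) (Fin (d l)) ℝ)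
    (reg : ℕ → ℝ) (c : ℝ) (Y : Matrix (Fin (d L)) (Fin (d 0)) ℝ) : ℝ :=
  Real.sqrt (∑ j : Fin L, (frob (gradReg d L W reg c Y j j.isLt)) ^ 2)

/-- Euclidean (Frobenius) distance from a tuple of weight matrices to a set of such tuples,
measured over the first `L` layers. -/
noncomputable def tdist (d : ℕ → ℕ) (L : ℕ)
    (W : ∀ l : ℕ, Matrix (Fin (d (l + 1))) (Fin (d l)) ℝ)
    (S : Set (∀ l : ℕ, Matrix (Fin (d (l + 1))) (Fin (d l)) ℝ)) : ℝ :=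
  sInf {r : ℝ | ∃ V ∈ S, r = Real.sqrt (∑ j : Fin L, (frob (W j - V j)) ^ 2)}

lemma chain_smul (d : ℕ → ℕ) (W : ∀ l : ℕ, Matrix (Fin (d (l + 1))) (Fin (d l)) ℝ)
    (s : ℕ → ℝ) (i k : ℕ) :
    chain d (fun l => s l • W l) i k = (∏ t ∈ Finset.range k, s (i + t)) • chain d W i k := by
  induction k with
  | zero => simp [chain]
  | succ k ih =>
      simp only [chain, ih, Finset.prod_range_succ, Matrix.smul_mul, Matrix.mul_smul,
        smul_smul, mul_comm]

lemma mcast_smul {a b c e : ℕ} (h1 : a = c) (h2 : b = e) (r : ℝ)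
    (M : Matrix (Fin a) (Fin b) ℝ) : mcast h1 h2 (r • M) = r • mcast h1 h2 M := rfl

lemma sqrt_prod' (f : ℕ → ℝ) (hf : ∀ l, 0 ≤ f l) (S : Finset ℕ) :
    Real.sqrt (∏ l ∈ S, f l) = ∏ l ∈ S, Real.sqrt (f l) := by
  induction S using Finset.induction_on with
  | empty => simp
  | insert _ _ h ih =>
      rw [Finset.prod_insert h, Finset.prod_insert h, Real.sqrt_mul (hf _), ih]

/-- `(W₁,…,W_L)` is a critical point of
`F(W) = ‖W_{L:1} − Y‖_F² + ∑_l λ_l‖W_l‖_F²` iff `(√λ₁W₁,…,√λ_LW_L)` is a critical point of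
`G(W) = ‖W_{L:1} − √λ Y‖_F² + λ∑_l‖W_l‖_F²`, where `λ = ∏_l λ_l`. -/
theorem stmt6 (L : ℕ) (hL : 2 ≤ L) (d : ℕ → ℕ) (lam : ℕ → ℝ) (hlam : ∀ l, 0 < lam l)
    (Y : Matrix (Fin (d L)) (Fin (d 0)) ℝ)
    (W : ∀ l : ℕ, Matrix (Fin (d (l + 1))) (Fin (d l)) ℝ) :
    (∀ (j : ℕ) (hj : j < L), gradReg d L W lam 1 Y j hj = 0) ↔
    (∀ (j : ℕ) (hj : j < L),
      gradReg d L (fun l => Real.sqrt (lam l) • W l)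
        (fun _ => ∏ l ∈ Finset.range L, lam l)
        (Real.sqrt (∏ l ∈ Finset.range L, lam l)) Y j hj = 0) := by
  set lamP : ℝ := ∏ l ∈ Finset.range L, lam l with hlamP
  set s : ℕ → ℝ := fun l => Real.sqrt (lam l) with hs
  have hs_pos : ∀ l, 0 < s l := fun l => Real.sqrt_pos.mpr (hlam l)
  have hsqrtP : Real.sqrt lamP = ∏ l ∈ Finset.range L, s l :=
    sqrt_prod' lam (fun l => (hlam l).le) _
  have hlamP_pos : 0 < lamP := Finset.prod_pos (fun i _ => hlam i)
  have key : ∀ (j : ℕ) (hj : j < L),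
      gradReg d L (fun l => s l • W l) (fun _ => lamP) (Real.sqrt lamP) Y j hj =
        ((∏ t ∈ Finset.range (L - 1 - j), s (j + 1 + t)) * Real.sqrt lamP *
          ∏ t ∈ Finset.range j, s t) • gradReg d L W lam 1 Y j hj := by
    intro j hj
    set a : ℝ := ∏ t ∈ Finset.range (L - 1 - j), s (j + 1 + t) with ha
    set b : ℝ := ∏ t ∈ Finset.range j, s t with hb
    have hsplit : a * (b * s j) = ∏ t ∈ Finset.range L, s t := by
      have h2 : j + 1 + (L - 1 - j) = L := by omega
      have h3 := Finset.prod_range_add s (j + 1) (L - 1 - j)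
      rw [h2, Finset.prod_range_succ] at h3
      rw [h3, ha, hb]
      ring
    have hsq : Real.sqrt lamP * Real.sqrt lamP = lamP :=
      Real.mul_self_sqrt hlamP_pos.le
    have hsj : lam j = s j * s j := (Real.mul_self_sqrt (hlam j).le).symm
    simp only [gradReg, chain_smul, mcast_smul, Matrix.transpose_smul, zero_add]
    rw [hsqrtP, ← smul_sub]
    simp only [one_smul, Matrix.smul_mul, Matrix.mul_smul, smul_smul, smul_add, ← ha, ← hb,
      ← hsqrtP]
    congr 1
    · congr 1
      ring
    · congr 1
      calc 2 * lamP * s j = Real.sqrt lamP * Real.sqrt lamP * (2 * s j) := by rw [hsq]; ring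
        _ = (a * (b * s j)) * Real.sqrt lamP * (2 * s j) := by rw [hsplit, hsqrtP]
        _ = a * Real.sqrt lamP * b * (2 * lam j) := by rw [hsj]; ring
  have hk : ∀ j : ℕ, ((∏ t ∈ Finset.range (L - 1 - j), s (j + 1 + t)) * Real.sqrt lamP *
      ∏ t ∈ Finset.range j, s t) ≠ 0 := by
    intro j
    have h1 : 0 < ∏ t ∈ Finset.range (L - 1 - j), s (j + 1 + t) :=
      Finset.prod_pos (fun i _ => hs_pos _)
    have h2 : 0 < ∏ t ∈ Finset.range j, s t := Finset.prod_pos (fun i _ => hs_pos _)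
    have h3 : 0 < Real.sqrt lamP := Real.sqrt_pos.mpr hlamP_pos
    positivity
  constructor
  · intro h j hj
    rw [key j hj, h j hj, smul_zero]
  · intro h j hj
    have := h j hj
    rw [key j hj] at this
    rcases smul_eq_zero.mp this with h0 | h0
    · exact absurd h0 (hk j)
    · exact h0
end

section
/- Let (W₁,...,W_L) ∈ 𝒲_{(σ,Π)} and (W₁',...,W_L') ∈ 𝒲_{(σ',Π')} be critical points of the symmetrized loss G with associated sorted singular-value vectors σ ≠ σ' in ℝ^{d_min}. Then ‖W − W'‖_F ≥ ‖σ − σ'‖₂ ≥ δ_σ, where δ_σ is the minimum gap between distinct elements of the root set 𝒴 = ∪_i {σ ≥ 0 : σ^{2L−1} + λσ − √λ y_i σ^{L−1} = 0}. -/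
open Matrix

/-- Old Mathlib lemma `Matrix.isHermitian_transpose_mul_self`, removed since. -/
theorem Matrix.isHermitian_transpose_mul_self {α : Type*} {m n : Type*} [CommSemiring α] [StarRing α]
    [TrivialStar α] [Fintype m] (A : Matrix m n α) : (Aᵀ * A).IsHermitian := by
  first
  | (rw [IsHermitian, conjTranspose_eq_transpose_of_trivial]; exact isSymm_transpose_mul_self A)
  | (simp [IsHermitian, conjTranspose_mul, conjTranspose_eq_transpose_of_trivial])

/-- `svals A i` is the `i`-th largest singular value of `A` (0-based), obtained as the
square root of the `i`-th largest eigenvalue of `AᴴA`. -/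
noncomputable def svals {m n : ℕ} (A : Matrix (Fin m) (Fin n) ℝ) (i : Fin n) : ℝ :=
  Real.sqrt ((Matrix.isHermitian_transpose_mul_self A).eigenvalues
    (Tuple.sort (Matrix.isHermitian_transpose_mul_self A).eigenvalues i.rev))


section MirskyAux
open Finset


lemma dot_sum_right {m n : ℕ} (x : Fin m → ℝ) (w : Fin n → Fin m → ℝ) :
    x ⬝ᵥ (∑ j, w j) = ∑ j, x ⬝ᵥ w j := by
  simp only [dotProduct, Finset.sum_apply, Finset.mul_sum]
  exact Finset.sum_comm

lemma dot_sum_left {m n : ℕ} (x : Fin m → ℝ) (w : Fin n → Fin m → ℝ) :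
    (∑ j, w j) ⬝ᵥ x = ∑ j, w j ⬝ᵥ x := by
  simp only [dotProduct, Finset.sum_apply, Finset.sum_mul]
  exact Finset.sum_comm

lemma bessel {m n : ℕ} (p : Fin n → Fin m → ℝ) (e : Fin n → ℝ) (he : ∀ i, e i ≤ 1)
    (hp : ∀ i j, p i ⬝ᵥ p j = if i = j then e i else 0) (x : Fin m → ℝ) :
    ∑ j, (x ⬝ᵥ p j) ^ 2 ≤ x ⬝ᵥ x := by
  set c : Fin n → ℝ := fun j => x ⬝ᵥ p j with hc
  set s : Fin m → ℝ := ∑ j, c j • p j with hs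
  have key : 0 ≤ (x - s) ⬝ᵥ (x - s) := by
    apply Finset.sum_nonneg; intro i _; exact mul_self_nonneg _
  have hxs : x ⬝ᵥ s = ∑ j, c j ^ 2 := by
    rw [hs, dot_sum_right]
    refine Finset.sum_congr rfl fun j _ => ?_
    rw [dotProduct_smul, smul_eq_mul]; rw [hc]; ring
  have hss : s ⬝ᵥ s = ∑ j, c j ^ 2 * e j := by
    rw [hs, dot_sum_left]
    refine Finset.sum_congr rfl fun j _ => ?_
    rw [smul_dotProduct, dot_sum_right]
    rw [Finset.sum_eq_single j]
    · rw [dotProduct_smul, hp j j, if_pos rfl]; simp only [smul_eq_mul]; ring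
    · intro k _ hk
      rw [dotProduct_smul, hp j k, if_neg (by exact fun h => hk h.symm)]; simp
    · simp
  have expand : (x - s) ⬝ᵥ (x - s) = x ⬝ᵥ x - 2 * (x ⬝ᵥ s) + s ⬝ᵥ s := by
    rw [dotProduct_sub, sub_dotProduct, sub_dotProduct, dotProduct_comm s x]; ring
  have hee : ∑ j, c j ^ 2 * e j ≤ ∑ j, c j ^ 2 := by
    apply Finset.sum_le_sum; intro j _
    calc c j ^ 2 * e j ≤ c j ^ 2 * 1 := mul_le_mul_of_nonneg_left (he j) (sq_nonneg _)
      _ = c j ^ 2 := mul_one _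
  rw [expand, hxs, hss] at key
  linarith

lemma tele (F : ℕ → ℝ) : ∀ n i, i ≤ n → ∑ k ∈ Finset.Ico i n, (F k - F (k+1)) = F i - F n := by
  intro n
  induction n with
  | zero => intro i hi; simp [Nat.le_zero.mp hi]
  | succ n ih =>
    intro i hi
    rcases Nat.lt_or_ge i (n+1) with h | h
    · have hi' : i ≤ n := by omega
      rw [Finset.sum_Ico_succ_top hi', ih i hi']; ring
    · have : i = n + 1 := by omega
      subst this; simp

lemma indsum (k n : ℕ) (hk : k < n) :
    ∑ i ∈ Finset.range n, (if i ≤ k then (1:ℝ) else 0) = (k : ℝ) + 1 := by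
  rw [← Finset.sum_filter]
  have : (Finset.range n).filter (fun i => i ≤ k) = Finset.range (k+1) := by
    ext i; simp; omega
  rw [this]
  simp [Finset.sum_const]

lemma keybound (n k l : ℕ) (hk : k < n) (hl : l < n)
    (C : ℕ → ℕ → ℝ) (hC0 : ∀ i j, 0 ≤ C i j)
    (hrow : ∀ i, ∑ j ∈ range n, C i j ≤ 1) (hcol : ∀ j, ∑ i ∈ range n, C i j ≤ 1) :
    ∑ i ∈ range n, ∑ j ∈ range n,
        ((if i ≤ k then (1:ℝ) else 0) * (if j ≤ l then (1:ℝ) else 0)) * C i j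
      ≤ ∑ i ∈ range n, (if i ≤ k then (1:ℝ) else 0) * (if i ≤ l then (1:ℝ) else 0) := by
  rcases le_total k l with hkl | hkl
  · have hrhs : ∑ i ∈ range n, (if i ≤ k then (1:ℝ) else 0) * (if i ≤ l then (1:ℝ) else 0)
        = (k : ℝ) + 1 := by
      have hpt : ∀ i, (if i ≤ k then (1:ℝ) else 0) * (if i ≤ l then (1:ℝ) else 0)
          = if i ≤ k then (1:ℝ) else 0 := by
        intro i
        by_cases h1 : i ≤ k
        · have h2 : i ≤ l := le_trans h1 hkl
          simp [h1, h2]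
        · simp [h1]
      simp_rw [hpt]
      exact indsum k n hk
    rw [hrhs]
    have hterm : ∀ i ∈ range n, ∑ j ∈ range n,
        ((if i ≤ k then (1:ℝ) else 0) * (if j ≤ l then (1:ℝ) else 0)) * C i j
        ≤ (if i ≤ k then (1:ℝ) else 0) := by
      intro i _
      by_cases hik : i ≤ k
      · simp only [hik, if_true, one_mul]
        calc ∑ j ∈ range n, (if j ≤ l then (1:ℝ) else 0) * C i j
            ≤ ∑ j ∈ range n, C i j := by
              apply Finset.sum_le_sum; intro j _
              by_cases hj : j ≤ l <;> simp [hj, hC0 i j]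
          _ ≤ 1 := hrow i
      · simp only [hik, if_false, zero_mul]
        apply le_of_eq
        apply Finset.sum_eq_zero; intro j _; ring
    calc ∑ i ∈ range n, ∑ j ∈ range n,
          ((if i ≤ k then (1:ℝ) else 0) * (if j ≤ l then (1:ℝ) else 0)) * C i j
        ≤ ∑ i ∈ range n, (if i ≤ k then (1:ℝ) else 0) := Finset.sum_le_sum hterm
      _ = (k : ℝ) + 1 := indsum k n hk
  · have hrhs : ∑ i ∈ range n, (if i ≤ k then (1:ℝ) else 0) * (if i ≤ l then (1:ℝ) else 0)
        = (l : ℝ) + 1 := by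
      have hpt : ∀ i, (if i ≤ k then (1:ℝ) else 0) * (if i ≤ l then (1:ℝ) else 0)
          = if i ≤ l then (1:ℝ) else 0 := by
        intro i
        by_cases h2 : i ≤ l
        · have h1 : i ≤ k := le_trans h2 hkl
          simp [h1, h2]
        · simp [h2]
      simp_rw [hpt]
      exact indsum l n hl
    rw [hrhs]
    rw [Finset.sum_comm]
    have hterm : ∀ j ∈ range n, ∑ i ∈ range n,
        ((if i ≤ k then (1:ℝ) else 0) * (if j ≤ l then (1:ℝ) else 0)) * C i j
        ≤ (if j ≤ l then (1:ℝ) else 0) := by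
      intro j _
      by_cases hjl : j ≤ l
      · simp only [hjl, if_true, mul_one]
        calc ∑ i ∈ range n, (if i ≤ k then (1:ℝ) else 0) * C i j
            ≤ ∑ i ∈ range n, C i j := by
              apply Finset.sum_le_sum; intro i _
              by_cases hi : i ≤ k <;> simp [hi, hC0 i j]
          _ ≤ 1 := hcol j
      · simp only [hjl, if_false, mul_zero, zero_mul]
        apply le_of_eq
        apply Finset.sum_eq_zero; intro i _; ring
    calc ∑ j ∈ range n, ∑ i ∈ range n,
          ((if i ≤ k then (1:ℝ) else 0) * (if j ≤ l then (1:ℝ) else 0)) * C i j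
        ≤ ∑ j ∈ range n, (if j ≤ l then (1:ℝ) else 0) := Finset.sum_le_sum hterm
      _ = (l : ℝ) + 1 := indsum l n hl


lemma swap4 (s : Finset ℕ) (f : ℕ → ℕ → ℕ → ℕ → ℝ) :
    ∑ i ∈ s, ∑ j ∈ s, ∑ k ∈ s, ∑ l ∈ s, f i j k l
      = ∑ k ∈ s, ∑ l ∈ s, ∑ i ∈ s, ∑ j ∈ s, f i j k l := by
  calc ∑ i ∈ s, ∑ j ∈ s, ∑ k ∈ s, ∑ l ∈ s, f i j k l
      = ∑ i ∈ s, ∑ k ∈ s, ∑ j ∈ s, ∑ l ∈ s, f i j k l :=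
        Finset.sum_congr rfl fun i _ => Finset.sum_comm
    _ = ∑ k ∈ s, ∑ i ∈ s, ∑ j ∈ s, ∑ l ∈ s, f i j k l := Finset.sum_comm
    _ = ∑ k ∈ s, ∑ i ∈ s, ∑ l ∈ s, ∑ j ∈ s, f i j k l :=
        Finset.sum_congr rfl fun k _ => Finset.sum_congr rfl fun i _ => Finset.sum_comm
    _ = ∑ k ∈ s, ∑ l ∈ s, ∑ i ∈ s, ∑ j ∈ s, f i j k l :=
        Finset.sum_congr rfl fun k _ => Finset.sum_comm

lemma rearrangeN (n : ℕ) (F G : ℕ → ℝ) (hF : Antitone F) (hG : Antitone G)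
    (hFn : F n = 0) (hGn : G n = 0)
    (C : ℕ → ℕ → ℝ) (hC0 : ∀ i j, 0 ≤ C i j)
    (hrow : ∀ i, ∑ j ∈ range n, C i j ≤ 1) (hcol : ∀ j, ∑ i ∈ range n, C i j ≤ 1) :
    ∑ i ∈ range n, ∑ j ∈ range n, C i j * (F i * G j)
      ≤ ∑ i ∈ range n, F i * G i := by
  set α : ℕ → ℝ := fun k => F k - F (k+1) with hα
  set β : ℕ → ℝ := fun k => G k - G (k+1) with hβ
  have hα0 : ∀ k, 0 ≤ α k := fun k => sub_nonneg.mpr (hF (Nat.le_succ k))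
  have hβ0 : ∀ k, 0 ≤ β k := fun k => sub_nonneg.mpr (hG (Nat.le_succ k))
  have hFrep : ∀ i < n, F i = ∑ k ∈ range n, (if i ≤ k then (1:ℝ) else 0) * α k := by
    intro i hi
    have h0 : ∀ k, (if i ≤ k then (1:ℝ) else 0) * α k = if i ≤ k then α k else 0 := by
      intro k; by_cases h : i ≤ k <;> simp [h]
    simp_rw [h0]
    have h1 : ∑ k ∈ range n, (if i ≤ k then α k else 0) = ∑ k ∈ Finset.Ico i n, α k := by
      rw [← Finset.sum_filter]
      congr 1; ext k; simp; omega
    rw [h1, hα, tele F n i (le_of_lt hi), hFn, sub_zero]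
  have hGrep : ∀ j < n, G j = ∑ l ∈ range n, (if j ≤ l then (1:ℝ) else 0) * β l := by
    intro j hj
    have h0 : ∀ l, (if j ≤ l then (1:ℝ) else 0) * β l = if j ≤ l then β l else 0 := by
      intro l; by_cases h : j ≤ l <;> simp [h]
    simp_rw [h0]
    have h1 : ∑ l ∈ range n, (if j ≤ l then β l else 0) = ∑ l ∈ Finset.Ico j n, β l := by
      rw [← Finset.sum_filter]
      congr 1; ext l; simp; omega
    rw [h1, hβ, tele G n j (le_of_lt hj), hGn, sub_zero]
  set X : ℕ → ℕ → ℕ → ℕ → ℝ := fun i j k l =>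
    (α k * β l) * (((if i ≤ k then (1:ℝ) else 0) * (if j ≤ l then (1:ℝ) else 0)) * C i j)
    with hX
  have hLHS : ∑ i ∈ range n, ∑ j ∈ range n, C i j * (F i * G j)
      = ∑ k ∈ range n, ∑ l ∈ range n, (α k * β l) *
          (∑ i ∈ range n, ∑ j ∈ range n,
            ((if i ≤ k then (1:ℝ) else 0) * (if j ≤ l then (1:ℝ) else 0)) * C i j) := by
    have step : ∀ i ∈ range n, ∀ j ∈ range n, C i j * (F i * G j)
        = ∑ k ∈ range n, ∑ l ∈ range n, X i j k l := by
      intro i hi j hj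
      rw [hFrep i (mem_range.mp hi), hGrep j (mem_range.mp hj), Finset.sum_mul_sum,
        Finset.mul_sum]
      refine Finset.sum_congr rfl fun k _ => ?_
      rw [Finset.mul_sum]
      refine Finset.sum_congr rfl fun l _ => ?_
      rw [hX]; ring
    calc ∑ i ∈ range n, ∑ j ∈ range n, C i j * (F i * G j)
        = ∑ i ∈ range n, ∑ j ∈ range n, ∑ k ∈ range n, ∑ l ∈ range n, X i j k l :=
          Finset.sum_congr rfl fun i hi => Finset.sum_congr rfl fun j hj => step i hi j hj
      _ = ∑ k ∈ range n, ∑ l ∈ range n, ∑ i ∈ range n, ∑ j ∈ range n, X i j k l :=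
          swap4 _ _
      _ = _ := by
          refine Finset.sum_congr rfl fun k _ => Finset.sum_congr rfl fun l _ => ?_
          rw [Finset.mul_sum]
          refine Finset.sum_congr rfl fun i _ => ?_
          rw [Finset.mul_sum]
  have hRHS : ∑ i ∈ range n, F i * G i
      = ∑ k ∈ range n, ∑ l ∈ range n, (α k * β l) *
          (∑ i ∈ range n, (if i ≤ k then (1:ℝ) else 0) * (if i ≤ l then (1:ℝ) else 0)) := by
    have step : ∀ i ∈ range n, F i * G i
        = ∑ k ∈ range n, ∑ l ∈ range n, (α k * β l) *
            ((if i ≤ k then (1:ℝ) else 0) * (if i ≤ l then (1:ℝ) else 0)) := by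
      intro i hi
      rw [hFrep i (mem_range.mp hi), hGrep i (mem_range.mp hi), Finset.sum_mul_sum]
      refine Finset.sum_congr rfl fun k _ => ?_
      refine Finset.sum_congr rfl fun l _ => ?_
      ring
    calc ∑ i ∈ range n, F i * G i
        = ∑ i ∈ range n, ∑ k ∈ range n, ∑ l ∈ range n, (α k * β l) *
            ((if i ≤ k then (1:ℝ) else 0) * (if i ≤ l then (1:ℝ) else 0)) :=
          Finset.sum_congr rfl step
      _ = ∑ k ∈ range n, ∑ i ∈ range n, ∑ l ∈ range n, (α k * β l) *
            ((if i ≤ k then (1:ℝ) else 0) * (if i ≤ l then (1:ℝ) else 0)) :=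
          Finset.sum_comm
      _ = ∑ k ∈ range n, ∑ l ∈ range n, ∑ i ∈ range n, (α k * β l) *
            ((if i ≤ k then (1:ℝ) else 0) * (if i ≤ l then (1:ℝ) else 0)) :=
          Finset.sum_congr rfl fun k _ => Finset.sum_comm
      _ = _ := by
          refine Finset.sum_congr rfl fun k _ => Finset.sum_congr rfl fun l _ => ?_
          rw [Finset.mul_sum]
  rw [hLHS, hRHS]
  refine Finset.sum_le_sum fun k hk => Finset.sum_le_sum fun l hl => ?_
  apply mul_le_mul_of_nonneg_left _ (mul_nonneg (hα0 k) (hβ0 l))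
  exact keybound n k l (mem_range.mp hk) (mem_range.mp hl) C hC0 hrow hcol

lemma svd_exists {m n : ℕ} (A : Matrix (Fin m) (Fin n) ℝ) :
    ∃ (u : Fin n → Fin m → ℝ) (v : Fin n → Fin n → ℝ),
      (∀ i j, u i ⬝ᵥ u j = if i = j then (if svals A i = 0 then 0 else 1) else 0) ∧
      (∀ i j, v i ⬝ᵥ v j = if i = j then 1 else 0) ∧
      (∀ a b, A a b = ∑ i, svals A i * u i a * v i b) := by
  set hA := Matrix.isHermitian_transpose_mul_self A with hhA
  set τ : Fin n → Fin n := fun i => Tuple.sort hA.eigenvalues i.rev with hτ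
  have hτinj : Function.Injective τ := fun i j h => by
    have := (Tuple.sort hA.eigenvalues).injective h
    exact Fin.rev_injective this
  set μ : Fin n → ℝ := fun i => hA.eigenvalues (τ i) with hμ
  set v : Fin n → Fin n → ℝ := fun i => ⇑(hA.eigenvectorBasis (τ i)) with hv
  have hsv : ∀ i, svals A i = Real.sqrt (μ i) := fun i => rfl
  have hμ0 : ∀ i, 0 ≤ μ i := fun i =>
    (Matrix.posSemidef_conjTranspose_mul_self A).eigenvalues_nonneg (τ i)
  have hsq : ∀ i, svals A i ^ 2 = μ i := fun i => by
    rw [hsv i, Real.sq_sqrt (hμ0 i)]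
  have hvv : ∀ i j, v i ⬝ᵥ v j = if i = j then 1 else 0 := by
    intro i j
    have h := hA.eigenvectorBasis.orthonormal
    rw [orthonormal_iff_ite] at h
    have h2 := h (τ i) (τ j)
    have h3 : (hA.eigenvectorBasis (τ i) : Fin n → ℝ) ⬝ᵥ (hA.eigenvectorBasis (τ j))
        = if τ i = τ j then 1 else 0 := by
      rw [← h2]
      simp [EuclideanSpace.inner_eq_star_dotProduct]
      exact dotProduct_comm _ _
    have h4 : (if τ i = τ j then (1:ℝ) else 0) = if i = j then 1 else 0 := by
      simp [hτinj.eq_iff]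
    rw [hv]
    exact h3.trans h4
  have hATA : ∀ i, (Aᵀ * A) *ᵥ v i = μ i • v i := fun i => by
    rw [hv, hμ]
    exact hA.mulVec_eigenvectorBasis (τ i)
  have hdotATA : ∀ (x y : Fin n → ℝ), (A *ᵥ x) ⬝ᵥ (A *ᵥ y) = x ⬝ᵥ ((Aᵀ * A) *ᵥ y) := by
    intro x y
    rw [← mulVec_mulVec, dotProduct_mulVec x, vecMul_transpose]
  have hAvdot : ∀ i j, (A *ᵥ v i) ⬝ᵥ (A *ᵥ v j) = if i = j then μ i else 0 := by
    intro i j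
    rw [hdotATA, hATA j, dotProduct_smul, smul_eq_mul, hvv i j]
    by_cases h : i = j <;> simp [h]
  set u : Fin n → Fin m → ℝ := fun i =>
    if svals A i = 0 then 0 else (svals A i)⁻¹ • (A *ᵥ v i) with hu
  have hAv0 : ∀ i, svals A i = 0 → A *ᵥ v i = 0 := by
    intro i h
    have hμi : μ i = 0 := by rw [← hsq i, h]; ring
    apply dotProduct_self_eq_zero.mp
    rw [hAvdot i i, if_pos rfl, hμi]
  have hAvu : ∀ i, A *ᵥ v i = svals A i • u i := by
    intro i
    by_cases h : svals A i = 0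
    · rw [hAv0 i h, hu]; simp [h]
    · rw [hu]; simp only [h, if_neg, if_false]
      rw [smul_smul, mul_inv_cancel₀ h, one_smul]
  have huu : ∀ i j, u i ⬝ᵥ u j = if i = j then (if svals A i = 0 then 0 else 1) else 0 := by
    intro i j
    by_cases hi : svals A i = 0
    · have : u i = 0 := by rw [hu]; simp [hi]
      rw [this, zero_dotProduct]
      by_cases h : i = j
      · subst h; simp [hi]
      · simp [h]
    · by_cases hj : svals A j = 0
      · have : u j = 0 := by rw [hu]; simp [hj]
        rw [this, dotProduct_zero]
        have hij : i ≠ j := fun h => hi (h ▸ hj)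
        simp [hij]
      · have hui : u i = (svals A i)⁻¹ • (A *ᵥ v i) := by rw [hu]; simp [hi]
        have huj : u j = (svals A j)⁻¹ • (A *ᵥ v j) := by rw [hu]; simp [hj]
        rw [hui, huj, smul_dotProduct, dotProduct_smul, hAvdot i j]
        by_cases h : i = j
        · subst h
          simp only [if_pos rfl, smul_eq_mul, hi, if_neg hi]
          rw [← hsq i]
          field_simp
          simp
        · simp [h]
  refine ⟨u, v, huu, hvv, ?_⟩
  -- completeness relation for rows of the square orthonormal system v
  have hVV : ∀ b c : Fin n, (∑ i, v i b * v i c) = if b = c then 1 else 0 := by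
    intro b c
    set M : Matrix (Fin n) (Fin n) ℝ := Matrix.of (fun i b => v i b) with hM
    have hMMT : M * Mᵀ = 1 := by
      ext i j
      rw [Matrix.mul_apply]
      have : ∑ k, M i k * Mᵀ k j = v i ⬝ᵥ v j := by
        simp [hM, dotProduct, Matrix.transpose_apply]
      rw [this, hvv i j]
      simp [Matrix.one_apply]
    have hMTM : Mᵀ * M = 1 := mul_eq_one_comm.mp hMMT
    have := congrFun (congrFun hMTM b) c
    rw [Matrix.mul_apply] at this
    have h2 : ∑ k, Mᵀ b k * M k c = ∑ i, v i b * v i c := by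
      simp [hM, Matrix.transpose_apply]
    rw [h2] at this
    rw [this]
    simp [Matrix.one_apply]
  intro a b
  have step1 : ∀ i : Fin n, svals A i * u i a * v i b = (A *ᵥ v i) a * v i b := by
    intro i
    rw [hAvu i, Pi.smul_apply, smul_eq_mul]
  rw [Finset.sum_congr rfl (fun i _ => step1 i)]
  have step2 : ∀ i : Fin n, (A *ᵥ v i) a * v i b = ∑ c, A a c * (v i c * v i b) := by
    intro i
    rw [mulVec, dotProduct, Finset.sum_mul]
    exact Finset.sum_congr rfl fun c _ => by ring
  rw [Finset.sum_congr rfl (fun i _ => step2 i), Finset.sum_comm]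
  have step3 : ∀ c : Fin n, (∑ i, A a c * (v i c * v i b)) = A a c * (if c = b then 1 else 0) := by
    intro c
    rw [← Finset.mul_sum, hVV c b]
  rw [Finset.sum_congr rfl (fun c _ => step3 c)]
  rw [Finset.sum_eq_single b]
  · simp
  · intro c _ hc; simp [hc]
  · simp

lemma swap4' {a b c d : Type*} [Fintype a] [Fintype b] [Fintype c] [Fintype d]
    (f : a → b → c → d → ℝ) :
    ∑ i, ∑ j, ∑ k, ∑ l, f i j k l = ∑ k, ∑ l, ∑ i, ∑ j, f i j k l := by
  calc ∑ i, ∑ j, ∑ k, ∑ l, f i j k l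
      = ∑ i, ∑ k, ∑ j, ∑ l, f i j k l :=
        Finset.sum_congr rfl fun i _ => Finset.sum_comm
    _ = ∑ k, ∑ i, ∑ j, ∑ l, f i j k l := Finset.sum_comm
    _ = ∑ k, ∑ i, ∑ l, ∑ j, f i j k l :=
        Finset.sum_congr rfl fun k _ => Finset.sum_congr rfl fun i _ => Finset.sum_comm
    _ = ∑ k, ∑ l, ∑ i, ∑ j, f i j k l :=
        Finset.sum_congr rfl fun k _ => Finset.sum_comm

/-- expansion of the Frobenius inner product through rank-one decompositions -/
lemma expand_inner {m n : ℕ} (A B : Matrix (Fin m) (Fin n) ℝ)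
    (f g : Fin n → ℝ) (u p : Fin n → Fin m → ℝ) (v q : Fin n → Fin n → ℝ)
    (hA : ∀ a b, A a b = ∑ i, f i * u i a * v i b)
    (hB : ∀ a b, B a b = ∑ j, g j * p j a * q j b) :
    ∑ a, ∑ b, A a b * B a b
      = ∑ i, ∑ j, (f i * g j) * ((u i ⬝ᵥ p j) * (v i ⬝ᵥ q j)) := by
  have step : ∀ (a : Fin m) (b : Fin n), A a b * B a b
      = ∑ i, ∑ j, (f i * u i a * v i b) * (g j * p j a * q j b) := by
    intro a b
    rw [hA a b, hB a b, Finset.sum_mul_sum]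
  calc ∑ a, ∑ b, A a b * B a b
      = ∑ a, ∑ b, ∑ i, ∑ j, (f i * u i a * v i b) * (g j * p j a * q j b) :=
        Finset.sum_congr rfl fun a _ => Finset.sum_congr rfl fun b _ => step a b
    _ = ∑ i, ∑ j, ∑ a, ∑ b, (f i * u i a * v i b) * (g j * p j a * q j b) := swap4' _
    _ = ∑ i, ∑ j, (f i * g j) * ((u i ⬝ᵥ p j) * (v i ⬝ᵥ q j)) := by
        refine Finset.sum_congr rfl fun i _ => Finset.sum_congr rfl fun j _ => ?_
        rw [dotProduct, dotProduct, Finset.sum_mul_sum, Finset.mul_sum]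
        refine Finset.sum_congr rfl fun a _ => ?_
        rw [Finset.mul_sum]
        refine Finset.sum_congr rfl fun b _ => ?_
        ring

/-- rearrangement inequality over `Fin n` -/
lemma rearrangeF {n : ℕ} (f g : Fin n → ℝ) (hf : Antitone f) (hg : Antitone g)
    (hf0 : ∀ i, 0 ≤ f i) (hg0 : ∀ i, 0 ≤ g i)
    (D : Fin n → Fin n → ℝ) (hD0 : ∀ i j, 0 ≤ D i j)
    (hrow : ∀ i, ∑ j, D i j ≤ 1) (hcol : ∀ j, ∑ i, D i j ≤ 1) :
    ∑ i, ∑ j, D i j * (f i * g j) ≤ ∑ i, f i * g i := by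
  set F : ℕ → ℝ := fun k => if h : k < n then f ⟨k, h⟩ else 0 with hF
  set G : ℕ → ℝ := fun k => if h : k < n then g ⟨k, h⟩ else 0 with hG
  set C : ℕ → ℕ → ℝ := fun k l =>
    if h : k < n ∧ l < n then D ⟨k, h.1⟩ ⟨l, h.2⟩ else 0 with hC
  have hFa : Antitone F := by
    intro a b hab
    by_cases hb : b < n
    · have ha : a < n := lt_of_le_of_lt hab hb
      simp only [hF, dif_pos ha, dif_pos hb]
      exact hf hab
    · simp only [hF, dif_neg hb]
      by_cases ha : a < n
      · simp only [dif_pos ha]; exact hf0 _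
      · simp only [dif_neg ha]; exact le_refl 0
  have hGa : Antitone G := by
    intro a b hab
    by_cases hb : b < n
    · have ha : a < n := lt_of_le_of_lt hab hb
      simp only [hG, dif_pos ha, dif_pos hb]
      exact hg hab
    · simp only [hG, dif_neg hb]
      by_cases ha : a < n
      · simp only [dif_pos ha]; exact hg0 _
      · simp only [dif_neg ha]; exact le_refl 0
  have hFn : F n = 0 := by simp [hF]
  have hGn : G n = 0 := by simp [hG]
  have hC0 : ∀ i j, 0 ≤ C i j := by
    intro i j
    by_cases h : i < n ∧ j < n
    · simp only [hC, dif_pos h]; exact hD0 _ _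
    · simp only [hC, dif_neg h]; exact le_refl 0
  -- converting Fin sums to range sums
  have finconv : ∀ (φ : Fin n → ℝ) (Φ : ℕ → ℝ),
      (∀ i : Fin n, Φ i.1 = φ i) → ∑ i, φ i = ∑ k ∈ range n, Φ k := by
    intro φ Φ hΦ
    rw [← Fin.sum_univ_eq_sum_range]
    exact Finset.sum_congr rfl fun i _ => (hΦ i).symm
  have hrowN : ∀ i, ∑ j ∈ range n, C i j ≤ 1 := by
    intro i
    by_cases hi : i < n
    · have : ∑ j ∈ range n, C i j = ∑ j : Fin n, D ⟨i, hi⟩ j := by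
        rw [finconv (fun j => D ⟨i, hi⟩ j) (fun k => C i k) ?_]
        intro j; simp [hC, hi, j.isLt]
      rw [this]; exact hrow _
    · have : ∑ j ∈ range n, C i j = 0 := by
        apply Finset.sum_eq_zero; intro j _
        simp [hC, hi]
      rw [this]; norm_num
  have hcolN : ∀ j, ∑ i ∈ range n, C i j ≤ 1 := by
    intro j
    by_cases hj : j < n
    · have : ∑ i ∈ range n, C i j = ∑ i : Fin n, D i ⟨j, hj⟩ := by
        rw [finconv (fun i => D i ⟨j, hj⟩) (fun k => C k j) ?_]
        intro i; simp [hC, hj, i.isLt]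
      rw [this]; exact hcol _
    · have : ∑ i ∈ range n, C i j = 0 := by
        apply Finset.sum_eq_zero; intro i _
        simp [hC, hj]
      rw [this]; norm_num
  have key := rearrangeN n F G hFa hGa hFn hGn C hC0 hrowN hcolN
  have hL : ∑ i, ∑ j, D i j * (f i * g j)
      = ∑ i ∈ range n, ∑ j ∈ range n, C i j * (F i * G j) := by
    refine finconv _ _ ?_
    intro i
    refine (finconv (fun j => D i j * (f i * g j))
      (fun l => C (i : ℕ) l * (F (i : ℕ) * G l)) ?_).symm
    intro j
    simp [hC, hF, hG, i.isLt, j.isLt]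
  have hR : ∑ i, f i * g i = ∑ i ∈ range n, F i * G i := by
    refine finconv _ _ ?_
    intro i
    simp [hF, hG, i.isLt]
  rw [hL, hR]
  exact key

/-- von Neumann-type trace inequality -/
lemma vonNeumann {m n : ℕ} (A B : Matrix (Fin m) (Fin n) ℝ)
    (f g : Fin n → ℝ) (hf0 : ∀ i, 0 ≤ f i) (hg0 : ∀ i, 0 ≤ g i)
    (hf : Antitone f) (hg : Antitone g)
    (u p : Fin n → Fin m → ℝ) (v q : Fin n → Fin n → ℝ)
    (eu ep : Fin n → ℝ) (heu : ∀ i, eu i ≤ 1) (hep : ∀ i, ep i ≤ 1)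
    (hu : ∀ i j, u i ⬝ᵥ u j = if i = j then eu i else 0)
    (hp : ∀ i j, p i ⬝ᵥ p j = if i = j then ep i else 0)
    (hv : ∀ i j, v i ⬝ᵥ v j = if i = j then 1 else 0)
    (hq : ∀ i j, q i ⬝ᵥ q j = if i = j then 1 else 0)
    (hA : ∀ a b, A a b = ∑ i, f i * u i a * v i b)
    (hB : ∀ a b, B a b = ∑ j, g j * p j a * q j b) :
    ∑ a, ∑ b, A a b * B a b ≤ ∑ i, f i * g i := by
  rw [expand_inner A B f g u p v q hA hB]
  set D : Fin n → Fin n → ℝ := fun i j =>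
    ((u i ⬝ᵥ p j) ^ 2 + (v i ⬝ᵥ q j) ^ 2) / 2 with hD
  have hD0 : ∀ i j, 0 ≤ D i j := by
    intro i j
    apply div_nonneg _ (by norm_num)
    positivity
  have hterm : ∀ i j, (f i * g j) * ((u i ⬝ᵥ p j) * (v i ⬝ᵥ q j)) ≤ D i j * (f i * g j) := by
    intro i j
    rw [mul_comm (D i j)]
    apply mul_le_mul_of_nonneg_left _ (mul_nonneg (hf0 i) (hg0 j))
    have := sq_nonneg ((u i ⬝ᵥ p j) - (v i ⬝ᵥ q j))
    rw [hD]
    nlinarith [sq_nonneg ((u i ⬝ᵥ p j) - (v i ⬝ᵥ q j))]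
  have hrow : ∀ i, ∑ j, D i j ≤ 1 := by
    intro i
    have h1 : ∑ j, (u i ⬝ᵥ p j) ^ 2 ≤ u i ⬝ᵥ u i := bessel p ep hep hp (u i)
    have h2 : ∑ j, (v i ⬝ᵥ q j) ^ 2 ≤ v i ⬝ᵥ v i := bessel q (fun _ => 1) (fun _ => le_refl 1)
      (fun a b => by rw [hq a b]) (v i)
    have h3 : u i ⬝ᵥ u i ≤ 1 := by rw [hu i i, if_pos rfl]; exact heu i
    have h4 : v i ⬝ᵥ v i = 1 := by rw [hv i i, if_pos rfl]
    have : ∑ j, D i j = ((∑ j, (u i ⬝ᵥ p j) ^ 2) + (∑ j, (v i ⬝ᵥ q j) ^ 2)) / 2 := by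
      rw [hD, ← Finset.sum_add_distrib, ← Finset.sum_div]
    rw [this]
    linarith
  have hcol : ∀ j, ∑ i, D i j ≤ 1 := by
    intro j
    have h1 : ∑ i, (p j ⬝ᵥ u i) ^ 2 ≤ p j ⬝ᵥ p j := bessel u eu heu hu (p j)
    have h2 : ∑ i, (q j ⬝ᵥ v i) ^ 2 ≤ q j ⬝ᵥ q j := bessel v (fun _ => 1) (fun _ => le_refl 1)
      (fun a b => by rw [hv a b]) (q j)
    have h3 : p j ⬝ᵥ p j ≤ 1 := by rw [hp j j, if_pos rfl]; exact hep j
    have h4 : q j ⬝ᵥ q j = 1 := by rw [hq j j, if_pos rfl]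
    have h5 : ∑ i, D i j = ((∑ i, (p j ⬝ᵥ u i) ^ 2) + (∑ i, (q j ⬝ᵥ v i) ^ 2)) / 2 := by
      rw [hD, ← Finset.sum_add_distrib, ← Finset.sum_div]
      refine congrArg (· / 2) ?_
      refine Finset.sum_congr rfl fun i _ => ?_
      rw [dotProduct_comm (p j) (u i), dotProduct_comm (q j) (v i)]
    rw [h5]
    linarith
  calc ∑ i, ∑ j, (f i * g j) * ((u i ⬝ᵥ p j) * (v i ⬝ᵥ q j))
      ≤ ∑ i, ∑ j, D i j * (f i * g j) :=
        Finset.sum_le_sum fun i _ => Finset.sum_le_sum fun j _ => hterm i j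
    _ ≤ ∑ i, f i * g i := rearrangeF f g hf hg hf0 hg0 D hD0 hrow hcol

/-- Mirsky's inequality (Frobenius version). -/
lemma mirsky {m n : ℕ} (A B : Matrix (Fin m) (Fin n) ℝ)
    (hfA : Antitone (svals A)) (hgB : Antitone (svals B)) :
    ∑ i, (svals A i - svals B i) ^ 2 ≤ ∑ a, ∑ b, (A a b - B a b) ^ 2 := by
  obtain ⟨u, v, hu, hv, hA⟩ := svd_exists A
  obtain ⟨p, q, hp, hq, hB⟩ := svd_exists B
  set f := svals A with hf
  set g := svals B with hg
  have hf0 : ∀ i, 0 ≤ f i := fun i => Real.sqrt_nonneg _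
  have hg0 : ∀ i, 0 ≤ g i := fun i => Real.sqrt_nonneg _
  have heu : ∀ i, (if f i = 0 then (0:ℝ) else 1) ≤ 1 := by
    intro i; by_cases h : f i = 0 <;> simp [h]
  have hep : ∀ i, (if g i = 0 then (0:ℝ) else 1) ≤ 1 := by
    intro i; by_cases h : g i = 0 <;> simp [h]
  have hAA : ∑ a, ∑ b, A a b * A a b = ∑ i, f i ^ 2 := by
    rw [expand_inner A A f f u u v v hA hA]
    rw [Finset.sum_congr rfl (fun i (_ : i ∈ univ) => Finset.sum_eq_single i
      (fun j _ hj => by rw [hu i j, hv i j, if_neg (fun h => hj h.symm) ]; ring)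
      (fun h => absurd (Finset.mem_univ i) h))]
    refine Finset.sum_congr rfl fun i _ => ?_
    rw [hu i i, hv i i, if_pos rfl, if_pos rfl]
    by_cases h : f i = 0
    · simp [h]
    · simp [h]; ring
  have hBB : ∑ a, ∑ b, B a b * B a b = ∑ i, g i ^ 2 := by
    rw [expand_inner B B g g p p q q hB hB]
    rw [Finset.sum_congr rfl (fun i (_ : i ∈ univ) => Finset.sum_eq_single i
      (fun j _ hj => by rw [hp i j, hq i j, if_neg (fun h => hj h.symm)]; ring)
      (fun h => absurd (Finset.mem_univ i) h))]
    refine Finset.sum_congr rfl fun i _ => ?_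
    rw [hp i i, hq i i, if_pos rfl, if_pos rfl]
    by_cases h : g i = 0
    · simp [h]
    · simp [h]; ring
  have hAB : ∑ a, ∑ b, A a b * B a b ≤ ∑ i, f i * g i :=
    vonNeumann A B f g hf0 hg0 hfA hgB u p v q _ _ heu hep hu hp hv hq hA hB
  have expand : ∑ a, ∑ b, (A a b - B a b) ^ 2
      = (∑ a, ∑ b, A a b * A a b) - 2 * (∑ a, ∑ b, A a b * B a b)
        + (∑ a, ∑ b, B a b * B a b) := by
    rw [Finset.mul_sum, ← Finset.sum_sub_distrib, ← Finset.sum_add_distrib]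
    refine Finset.sum_congr rfl fun a _ => ?_
    rw [Finset.mul_sum, ← Finset.sum_sub_distrib, ← Finset.sum_add_distrib]
    refine Finset.sum_congr rfl fun b _ => ?_
    ring
  have expand2 : ∑ i, (f i - g i) ^ 2
      = (∑ i, f i ^ 2) - 2 * (∑ i, f i * g i) + (∑ i, g i ^ 2) := by
    rw [Finset.mul_sum, ← Finset.sum_sub_distrib, ← Finset.sum_add_distrib]
    refine Finset.sum_congr rfl fun i _ => ?_
    ring
  rw [expand, expand2, hAA, hBB]
  linarith

end MirskyAux

/-- let `W, W'` be critical points of the symmetrized loss whose layers have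
singular values given by the sorted vectors `σ ≠ σ'` (padded with zeros), each entry lying
in the root set `𝒴 = ∪_i {s ≥ 0 : s^{2L−1} + λs − √λ y_i s^{L−1} = 0}`.  Then
`‖W − W'‖_F ≥ ‖σ − σ'‖₂ ≥ δ_σ`, where `δ_σ` is the minimum gap between distinct elements
of `𝒴`. -/
theorem stmt9 (L : ℕ) (hL : 2 ≤ L) (lam : ℝ) (hlam : 0 < lam)
    (dmin : ℕ) (y : Fin dmin → ℝ)
    (Yset : Set ℝ)
    (hYset : Yset = {s : ℝ | 0 ≤ s ∧ ∃ i : Fin dmin,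
      s ^ (2 * L - 1) + lam * s - Real.sqrt lam * y i * s ^ (L - 1) = 0})
    (δσ : ℝ) (hδ : δσ = sInf {t : ℝ | ∃ a ∈ Yset, ∃ b ∈ Yset, a ≠ b ∧ t = |a - b|})
    (σ σ' : Fin dmin → ℝ)
    (hsort : Antitone σ) (hsort' : Antitone σ')
    (hσY : ∀ i, σ i ∈ Yset) (hσ'Y : ∀ i, σ' i ∈ Yset) (hne : σ ≠ σ')
    (d : ℕ → ℕ) (hdim : ∀ l, dmin ≤ d l)
    (W W' : ∀ l : ℕ, Matrix (Fin (d (l + 1))) (Fin (d l)) ℝ)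
    (hWs : ∀ l < L, ∀ j : Fin (d l),
      svals (W l) j = if h : (j : ℕ) < dmin then σ ⟨j, h⟩ else 0)
    (hW's : ∀ l < L, ∀ j : Fin (d l),
      svals (W' l) j = if h : (j : ℕ) < dmin then σ' ⟨j, h⟩ else 0) :
    Real.sqrt (∑ l : Fin L, (frob (W l - W' l)) ^ 2)
        ≥ Real.sqrt (∑ i, (σ i - σ' i) ^ 2)
    ∧ Real.sqrt (∑ i, (σ i - σ' i) ^ 2) ≥ δσ := by
  have hσ0 : ∀ i, 0 ≤ σ i := fun i => by
    have := hσY i; rw [hYset] at this; exact this.1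
  have hσ'0 : ∀ i, 0 ≤ σ' i := fun i => by
    have := hσ'Y i; rw [hYset] at this; exact this.1
  -- antitone of padded vectors
  have hpad : ∀ (N : ℕ) (τ : Fin dmin → ℝ), Antitone τ → (∀ i, 0 ≤ τ i) →
      Antitone (fun j : Fin N => if h : (j : ℕ) < dmin then τ ⟨j, h⟩ else 0) := by
    intro N τ hτ hτ0 a b hab
    by_cases hb : (b : ℕ) < dmin
    · have ha : (a : ℕ) < dmin := lt_of_le_of_lt hab hb
      simp only [dif_pos ha, dif_pos hb]
      exact hτ hab
    · simp only [dif_neg hb]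
      by_cases ha : (a : ℕ) < dmin
      · simp only [dif_pos ha]; exact hτ0 _
      · simp only [dif_neg ha]; exact le_refl 0
  have h0L : 0 < L := by omega
  set l0 : Fin L := ⟨0, h0L⟩ with hl0
  have hA : svals (W 0) = fun j : Fin (d 0) =>
      if h : (j : ℕ) < dmin then σ ⟨j, h⟩ else 0 := funext fun j => hWs 0 h0L j
  have hB : svals (W' 0) = fun j : Fin (d 0) =>
      if h : (j : ℕ) < dmin then σ' ⟨j, h⟩ else 0 := funext fun j => hW's 0 h0L j
  have hm := mirsky (W 0) (W' 0)
    (hA ▸ hpad (d 0) σ hsort hσ0) (hB ▸ hpad (d 0) σ' hsort' hσ'0)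
  -- identify the singular-value sum
  have hsum : ∑ j : Fin (d 0), (svals (W 0) j - svals (W' 0) j) ^ 2
      = ∑ i, (σ i - σ' i) ^ 2 := by
    rw [hA, hB]
    have h1 : ∀ j : Fin (d 0),
        ((if h : (j : ℕ) < dmin then σ ⟨j, h⟩ else 0) -
         (if h : (j : ℕ) < dmin then σ' ⟨j, h⟩ else 0)) ^ 2
        = (fun k : ℕ => if h : k < dmin then (σ ⟨k, h⟩ - σ' ⟨k, h⟩) ^ 2 else 0) j := by
      intro j
      by_cases h : (j : ℕ) < dmin
      · simp only [dif_pos h]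
      · simp only [dif_neg h]; ring
    rw [Finset.sum_congr rfl fun j _ => h1 j]
    rw [Fin.sum_univ_eq_sum_range
      (fun k : ℕ => if h : k < dmin then (σ ⟨k, h⟩ - σ' ⟨k, h⟩) ^ 2 else 0) (d 0)]
    have h2 : ∑ i : Fin dmin, (σ i - σ' i) ^ 2
        = ∑ k ∈ Finset.range dmin,
            (fun k : ℕ => if h : k < dmin then (σ ⟨k, h⟩ - σ' ⟨k, h⟩) ^ 2 else 0) k := by
      rw [← Fin.sum_univ_eq_sum_range]
      refine Finset.sum_congr rfl fun i _ => ?_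
      simp [i.isLt]
    rw [h2]
    refine (Finset.sum_subset (Finset.range_subset_range.mpr (hdim 0)) ?_).symm
    intro k _ hk
    simp only [Finset.mem_range] at hk
    simp [hk]
  -- Frobenius side
  have hfrob : (frob (W 0 - W' 0)) ^ 2
      = ∑ a, ∑ b, ((W 0) a b - (W' 0) a b) ^ 2 := by
    rw [frob, Real.sq_sqrt]
    · refine Finset.sum_congr rfl fun a _ => Finset.sum_congr rfl fun b _ => ?_
      simp [Matrix.sub_apply]
    · exact Finset.sum_nonneg fun a _ => Finset.sum_nonneg fun b _ => sq_nonneg _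
  have key1 : ∑ i, (σ i - σ' i) ^ 2 ≤ ∑ l : Fin L, (frob (W l - W' l)) ^ 2 := by
    calc ∑ i, (σ i - σ' i) ^ 2
        = ∑ j : Fin (d 0), (svals (W 0) j - svals (W' 0) j) ^ 2 := hsum.symm
      _ ≤ ∑ a, ∑ b, ((W 0) a b - (W' 0) a b) ^ 2 := hm
      _ = (frob (W 0 - W' 0)) ^ 2 := hfrob.symm
      _ = (frob (W (l0 : ℕ) - W' (l0 : ℕ))) ^ 2 := by rw [hl0]
      _ ≤ ∑ l : Fin L, (frob (W l - W' l)) ^ 2 :=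
          Finset.single_le_sum (f := fun l : Fin L => (frob (W (l : ℕ) - W' (l : ℕ))) ^ 2)
            (fun l _ => sq_nonneg _) (Finset.mem_univ l0)
  constructor
  · exact Real.sqrt_le_sqrt key1
  · -- second inequality
    obtain ⟨i0, hi0⟩ := Function.ne_iff.mp hne
    set S : Set ℝ := {t : ℝ | ∃ a ∈ Yset, ∃ b ∈ Yset, a ≠ b ∧ t = |a - b|} with hS
    have hmem : |σ i0 - σ' i0| ∈ S := ⟨σ i0, hσY i0, σ' i0, hσ'Y i0, hi0, rfl⟩
    have hbdd : BddBelow S := by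
      refine ⟨0, fun t ht => ?_⟩
      obtain ⟨a, _, b, _, _, rfl⟩ := ht
      exact abs_nonneg _
    have h1 : δσ ≤ |σ i0 - σ' i0| := by
      rw [hδ]
      exact csInf_le hbdd hmem
    have h2 : |σ i0 - σ' i0| ≤ Real.sqrt (∑ i, (σ i - σ' i) ^ 2) := by
      rw [← Real.sqrt_sq_eq_abs]
      apply Real.sqrt_le_sqrt
      exact Finset.single_le_sum (fun i _ => sq_nonneg ((σ i - σ' i)))
        (Finset.mem_univ i0)
    exact le_trans h1 h2
end

section
/- Under the balancing identity (∇_l G(W)W_lᵀ − W_{l+1}ᵀ∇_{l+1}G(W))/2 = λ(W_lW_lᵀ − W_{l+1}ᵀW_{l+1}), if ‖W_k‖ ≤ (3/2)σ*_max for all k, then ‖W_{l+1}ᵀW_{l+1} − W_lW_lᵀ‖_F ≤ (3√2 σ*_max)/(4λ) · ‖∇G(W)‖_F for each l ∈ [L−1], where ‖∇G(W)‖_F² = Σ_l ‖∇_l G(W)‖_F². -/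
open Matrix

open scoped Matrix.Norms.L2Operator

section aux
variable {m n p : Type*} [Fintype m] [Fintype n] [Fintype p]

lemma spec_eq [DecidableEq n] (A : Matrix m n ℝ) : spec A = ‖A‖ := rfl

lemma spec_nonneg [DecidableEq n] (A : Matrix m n ℝ) : 0 ≤ spec A := norm_nonneg _

lemma frob_nonneg (A : Matrix m n ℝ) : 0 ≤ frob A := Real.sqrt_nonneg _

lemma frob_eq_norm (A : Matrix m n ℝ) :
    frob A = ‖((WithLp.equiv 2 ((_ : m × n) → ℝ)).symm fun p => A p.1 p.2 :
      EuclideanSpace ℝ (m × n))‖ := by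
  rw [frob, EuclideanSpace.norm_eq]
  congr 1
  rw [Fintype.sum_prod_type]
  exact Finset.sum_congr rfl fun i _ => Finset.sum_congr rfl fun j _ => by
    simp [Real.norm_eq_abs, sq_abs]

lemma frob_transpose (A : Matrix m n ℝ) : frob Aᵀ = frob A := by
  rw [frob, frob, Finset.sum_comm]
  simp [Matrix.transpose_apply]

lemma frob_sub_le (A B : Matrix m n ℝ) : frob (A - B) ≤ frob A + frob B := by
  rw [frob_eq_norm, frob_eq_norm, frob_eq_norm]
  exact norm_sub_le (E := EuclideanSpace ℝ (m × n)) ((WithLp.equiv 2 ((_ : m × n) → ℝ)).symm fun p => A p.1 p.2)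
    ((WithLp.equiv 2 ((_ : m × n) → ℝ)).symm fun p => B p.1 p.2)

lemma frob_smul (c : ℝ) (A : Matrix m n ℝ) : frob (c • A) = |c| * frob A := by
  rw [frob_eq_norm, frob_eq_norm A]
  have : ((WithLp.equiv 2 ((_ : m × n) → ℝ)).symm fun p => (c • A) p.1 p.2 :
      EuclideanSpace ℝ (m × n)) = c • ((WithLp.equiv 2 ((_ : m × n) → ℝ)).symm
      fun p => A p.1 p.2 : EuclideanSpace ℝ (m × n)) := rfl
  rw [this, norm_smul, Real.norm_eq_abs]

lemma frob_sq_cols (B : Matrix m n ℝ) :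
    frob B ^ 2 = ∑ j, ‖((WithLp.equiv 2 ((_ : m) → ℝ)).symm fun i => B i j :
      EuclideanSpace ℝ m)‖ ^ 2 := by
  rw [frob, Real.sq_sqrt (by positivity), Finset.sum_comm]
  refine Finset.sum_congr rfl fun j _ => ?_
  rw [EuclideanSpace.norm_eq, Real.sq_sqrt (by positivity)]
  exact Finset.sum_congr rfl fun i _ => by simp [Real.norm_eq_abs, sq_abs]

lemma frob_mul_le_specL [DecidableEq n] (A : Matrix m n ℝ) (B : Matrix n p ℝ) :
    frob (A * B) ≤ spec A * frob B := by
  have h1 : frob (A * B) ^ 2 ≤ (spec A * frob B) ^ 2 := by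
    rw [frob_sq_cols, mul_pow, frob_sq_cols, Finset.mul_sum]
    refine Finset.sum_le_sum fun j _ => ?_
    have hcol : ((WithLp.equiv 2 ((_ : m) → ℝ)).symm fun i => (A * B) i j :
        EuclideanSpace ℝ m) = (EuclideanSpace.equiv m ℝ).symm (A *ᵥ fun k => B k j) := by
      ext i; simp [Matrix.mul_apply, Matrix.mulVec, dotProduct]
    rw [hcol, ← mul_pow]
    have := Matrix.l2_opNorm_mulVec A
      ((WithLp.equiv 2 ((_ : n) → ℝ)).symm fun k => B k j : EuclideanSpace ℝ n)
    exact pow_le_pow_left₀ (norm_nonneg _) (by rw [spec_eq]; exact this) 2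
  have h2 := Real.sqrt_le_sqrt h1
  rwa [Real.sqrt_sq (frob_nonneg _),
    Real.sqrt_sq (mul_nonneg (spec_nonneg _) (frob_nonneg _))] at h2

lemma spec_transpose [DecidableEq m] [DecidableEq n] (A : Matrix m n ℝ) : spec Aᵀ = spec A := by
  have hA : Aᵀ = Aᴴ := by ext i j; simp [Matrix.conjTranspose_apply]
  rw [hA, spec_eq, spec_eq, Matrix.l2_opNorm_conjTranspose]

lemma frob_mul_le_specR [DecidableEq m] [DecidableEq n] [DecidableEq p] (A : Matrix m n ℝ) (B : Matrix n p ℝ) :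
    frob (A * B) ≤ frob A * spec B := by
  calc frob (A * B) = frob (Bᵀ * Aᵀ) := by rw [← Matrix.transpose_mul, frob_transpose]
    _ ≤ spec Bᵀ * frob Aᵀ := frob_mul_le_specL _ _
    _ = frob A * spec B := by rw [spec_transpose, frob_transpose, mul_comm]

end aux

/-- under the balancing identity and the spectral bound
`‖W_k‖ ≤ (3/2)σ*_max` for all layers, each consecutive pair of weights is approximately
balanced: `‖W_{l+1}ᵀW_{l+1} − W_lW_lᵀ‖_F ≤ (3√2σ*_max)/(4λ)·‖∇G(W)‖_F`. -/
theorem stmt12 (L : ℕ) (hL : 2 ≤ L) (d : ℕ → ℕ) (lam : ℝ) (hlam : 0 < lam)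
    (σmax : ℝ) (hσ : 0 < σmax)
    (Y : Matrix (Fin (d L)) (Fin (d 0)) ℝ)
    (W : ∀ l : ℕ, Matrix (Fin (d (l + 1))) (Fin (d l)) ℝ)
    (hbal : ∀ (j : ℕ) (hj : j + 1 < L),
      ((1 : ℝ) / 2) • (gradReg d L W (fun _ => lam) (Real.sqrt lam) Y j (by omega) * (W j)ᵀ
          - (W (j + 1))ᵀ * gradReg d L W (fun _ => lam) (Real.sqrt lam) Y (j + 1) hj)
        = lam • (W j * (W j)ᵀ - (W (j + 1))ᵀ * W (j + 1)))
    (hspec : ∀ k < L, spec (W k) ≤ 3 / 2 * σmax) :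
    ∀ (j : ℕ), j + 1 < L →
      frob ((W (j + 1))ᵀ * W (j + 1) - W j * (W j)ᵀ)
        ≤ (3 * Real.sqrt 2 * σmax) / (4 * lam)
            * gradNorm d L W (fun _ => lam) (Real.sqrt lam) Y := by
  intro j hj
  have hjL : j < L := by omega
  have h := hbal j hj
  have h2 : lam • ((W (j + 1))ᵀ * W (j + 1) - W j * (W j)ᵀ)
      = (1 / 2 : ℝ) • ((W (j + 1))ᵀ * gradReg d L W (fun _ => lam) (Real.sqrt lam) Y (j + 1) hj
          - gradReg d L W (fun _ => lam) (Real.sqrt lam) Y j hjL * (W j)ᵀ) := by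
    linear_combination (norm := module) h
  set a := frob (gradReg d L W (fun _ => lam) (Real.sqrt lam) Y j hjL) with ha'
  set b := frob (gradReg d L W (fun _ => lam) (Real.sqrt lam) Y (j + 1) hj) with hb'
  have ha : 0 ≤ a := frob_nonneg _
  have hb : 0 ≤ b := frob_nonneg _
  set gn := gradNorm d L W (fun _ => lam) (Real.sqrt lam) Y with hgn
  have hgn0 : 0 ≤ gn := Real.sqrt_nonneg _
  have hne : (⟨j, hjL⟩ : Fin L) ≠ ⟨j + 1, hj⟩ := by
    intro hh
    exact absurd (congrArg Fin.val hh) (by simp)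
  have hpair : ∑ i ∈ ({⟨j, hjL⟩, ⟨j + 1, hj⟩} : Finset (Fin L)),
      (frob (gradReg d L W (fun _ => lam) (Real.sqrt lam) Y ↑i i.isLt)) ^ 2
      = a ^ 2 + b ^ 2 := by
    rw [Finset.sum_pair hne]
  have hsum : a ^ 2 + b ^ 2 ≤ ∑ i : Fin L,
      (frob (gradReg d L W (fun _ => lam) (Real.sqrt lam) Y ↑i i.isLt)) ^ 2 := by
    calc a ^ 2 + b ^ 2
        = ∑ i ∈ ({⟨j, hjL⟩, ⟨j + 1, hj⟩} : Finset (Fin L)),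
            (frob (gradReg d L W (fun _ => lam) (Real.sqrt lam) Y ↑i i.isLt)) ^ 2 :=
          hpair.symm
      _ ≤ _ := Finset.sum_le_sum_of_subset_of_nonneg (Finset.subset_univ _)
          (fun i _ _ => sq_nonneg _)
  have hab : a + b ≤ Real.sqrt 2 * gn := by
    have h1 : a + b = Real.sqrt ((a + b) ^ 2) := (Real.sqrt_sq (by positivity)).symm
    rw [h1, hgn, gradNorm, ← Real.sqrt_mul (by norm_num : (0:ℝ) ≤ 2)]
    exact Real.sqrt_le_sqrt (by nlinarith [sq_nonneg (a - b)])
  have t1 : frob ((W (j + 1))ᵀ * gradReg d L W (fun _ => lam) (Real.sqrt lam) Y (j + 1) hj)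
      ≤ 3 / 2 * σmax * b := by
    refine le_trans (frob_mul_le_specL _ _) ?_
    rw [spec_transpose]
    exact mul_le_mul_of_nonneg_right (hspec (j + 1) hj) hb
  have t2 : frob (gradReg d L W (fun _ => lam) (Real.sqrt lam) Y j hjL * (W j)ᵀ)
      ≤ a * (3 / 2 * σmax) := by
    refine le_trans (frob_mul_le_specR _ _) ?_
    rw [spec_transpose]
    exact mul_le_mul_of_nonneg_left (hspec j hjL) ha
  have t3 := frob_sub_le
    ((W (j + 1))ᵀ * gradReg d L W (fun _ => lam) (Real.sqrt lam) Y (j + 1) hj)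
    (gradReg d L W (fun _ => lam) (Real.sqrt lam) Y j hjL * (W j)ᵀ)
  have key : lam * frob ((W (j + 1))ᵀ * W (j + 1) - W j * (W j)ᵀ)
      ≤ 3 / 4 * σmax * (a + b) := by
    have e1 : lam * frob ((W (j + 1))ᵀ * W (j + 1) - W j * (W j)ᵀ)
        = (1 / 2) * frob ((W (j + 1))ᵀ * gradReg d L W (fun _ => lam) (Real.sqrt lam) Y (j + 1) hj
            - gradReg d L W (fun _ => lam) (Real.sqrt lam) Y j hjL * (W j)ᵀ) := by
      have e0 := congrArg frob h2
      rw [frob_smul, frob_smul, abs_of_pos hlam] at e0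
      rw [e0]
      norm_num
    rw [e1]
    nlinarith [frob_nonneg ((W (j + 1))ᵀ * gradReg d L W (fun _ => lam) (Real.sqrt lam) Y (j + 1) hj
        - gradReg d L W (fun _ => lam) (Real.sqrt lam) Y j hjL * (W j)ᵀ)]
  calc frob ((W (j + 1))ᵀ * W (j + 1) - W j * (W j)ᵀ)
      = (lam * frob ((W (j + 1))ᵀ * W (j + 1) - W j * (W j)ᵀ)) / lam := by
        field_simp
    _ ≤ (3 / 4 * σmax * (a + b)) / lam := by gcongr
    _ ≤ (3 / 4 * σmax * (Real.sqrt 2 * gn)) / lam := by gcongr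
    _ = 3 * Real.sqrt 2 * σmax / (4 * lam) * gn := by field_simp
end

section
/- Let H be an n×n orthogonal matrix partitioned into blocks H^{(i,j)} (i,j ∈ [q]) according to a partition of [n], and suppose each diagonal block satisfies ‖H^{(i,i)}‖ ≤ 1. Then for each i, there exists an orthogonal matrix T of the same size as H^{(i,i)} such that ‖H^{(i,i)} − T‖_F² ≤ Σ_{j≠i} ‖H^{(i,j)}‖_F². -/
open Matrix

section Helpers

variable {m : Type*} [Fintype m] [DecidableEq m]


private lemma norm_withLp (w : m → ℝ) :
    ‖(WithLp.equiv 2 (m → ℝ)).symm w‖ = Real.sqrt (∑ i, w i ^ 2) := by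
  rw [EuclideanSpace.norm_eq]; simp [sq_abs]

private lemma sq_sum_mulVec_le (A : Matrix m m ℝ) (v : m → ℝ) :
    ∑ i, (A *ᵥ v) i ^ 2 ≤ spec A ^ 2 * ∑ i, v i ^ 2 := by
  have h := (LinearMap.toContinuousLinearMap (toEuclideanLin A)).le_opNorm
      ((WithLp.equiv 2 (m → ℝ)).symm v)
  rw [LinearMap.coe_toContinuousLinearMap', toEuclideanLin_apply, WithLp.equiv_symm_apply, WithLp.ofLp_toLp,
    ← WithLp.equiv_symm_apply, norm_withLp, norm_withLp] at h
  have h2 := mul_self_le_mul_self (Real.sqrt_nonneg _) h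
  rw [Real.mul_self_sqrt (by positivity)] at h2
  calc ∑ i, (A *ᵥ v) i ^ 2 ≤ _ := h2
    _ = spec A ^ 2 * ∑ i, v i ^ 2 := by
        rw [mul_mul_mul_comm, Real.mul_self_sqrt (by positivity)]
        rw [spec]; ring

private lemma spec_le_one_of (A : Matrix m m ℝ)
    (h : ∀ v : m → ℝ, ∑ i, (A *ᵥ v) i ^ 2 ≤ ∑ i, v i ^ 2) : spec A ≤ 1 := by
  rw [spec]
  apply ContinuousLinearMap.opNorm_le_bound _ zero_le_one
  intro x
  rw [one_mul]
  have hx : x = (WithLp.equiv 2 (m → ℝ)).symm (WithLp.equiv 2 (m → ℝ) x) := rfl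
  rw [hx, LinearMap.coe_toContinuousLinearMap', toEuclideanLin_apply, WithLp.equiv_symm_apply, WithLp.ofLp_toLp,
    ← WithLp.equiv_symm_apply, norm_withLp, norm_withLp]
  exact Real.sqrt_le_sqrt (h _)

set_option linter.unusedSectionVars false

private lemma mul_vecMulVec (A : Matrix m m ℝ) (w u : m → ℝ) :
    A * vecMulVec w u = vecMulVec (A *ᵥ w) u := by
  ext i j
  simp only [mul_apply, vecMulVec_apply, mulVec, dotProduct, Finset.sum_mul]
  exact Finset.sum_congr rfl fun k _ => by ring

private lemma vecMulVec_mul (w u : m → ℝ) (A : Matrix m m ℝ) :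
    vecMulVec w u * A = vecMulVec w (Aᵀ *ᵥ u) := by
  ext i j
  simp only [mul_apply, vecMulVec_apply, mulVec, dotProduct, Finset.mul_sum, transpose_apply]
  exact Finset.sum_congr rfl fun k _ => by ring

private lemma vecMulVec_transp (w u : m → ℝ) : (vecMulVec w u)ᵀ = vecMulVec u w := by
  ext i j; simp [vecMulVec_apply, mul_comm]

private lemma trace_vecMulVec (w u : m → ℝ) : trace (vecMulVec w u) = w ⬝ᵥ u := by
  simp [trace, vecMulVec_apply, dotProduct, diag]

private lemma vecMulVec_mulVec (w u v : m → ℝ) :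
    vecMulVec w u *ᵥ v = (u ⬝ᵥ v) • w := by
  ext i
  simp only [mulVec, dotProduct, vecMulVec_apply, Pi.smul_apply, smul_eq_mul, Finset.mul_sum]
  rw [Finset.sum_mul]
  exact Finset.sum_congr rfl fun k _ => by ring

private lemma trace_transp_mul (A C : Matrix m m ℝ) :
    trace (Aᵀ * C) = ∑ i, ∑ j, A i j * C i j := by
  simp only [trace, diag, mul_apply, transpose_apply]
  exact Finset.sum_comm

private lemma trace_transp_mul_self (A : Matrix m m ℝ) :
    trace (Aᵀ * A) = ∑ i, ∑ j, A i j ^ 2 := by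
  rw [trace_transp_mul]
  exact Finset.sum_congr rfl fun i _ => Finset.sum_congr rfl fun j _ => (sq _).symm

private lemma exists_unit_ker (A : Matrix m m ℝ) (h : LinearMap.ker A.mulVecLin ≠ ⊥) :
    ∃ u : m → ℝ, A *ᵥ u = 0 ∧ ∑ i, u i ^ 2 = 1 := by
  obtain ⟨v, hv, hv0⟩ := Submodule.exists_mem_ne_zero_of_ne_bot h
  rw [LinearMap.mem_ker, mulVecLin_apply] at hv
  have hpos : 0 < ∑ i, v i ^ 2 := by
    obtain ⟨i, hi⟩ := Function.ne_iff.mp hv0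
    exact Finset.sum_pos' (fun _ _ => sq_nonneg _)
      ⟨i, Finset.mem_univ i, by simpa [sq] using mul_self_pos.mpr hi⟩
  refine ⟨(Real.sqrt (∑ i, v i ^ 2))⁻¹ • v, ?_, ?_⟩
  · rw [mulVec_smul, hv, smul_zero]
  · simp only [Pi.smul_apply, smul_eq_mul, mul_pow]
    rw [← Finset.mul_sum, inv_pow, Real.sq_sqrt hpos.le, inv_mul_cancel₀ hpos.ne']

private lemma key_base (B : Matrix m m ℝ) (hB : spec B ≤ 1)
    (hker : LinearMap.ker B.mulVecLin = ⊥) :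
    ∃ T : Matrix m m ℝ, Tᵀ * T = 1 ∧ trace (Bᵀ * B) ≤ trace (Tᵀ * B) := by
  have hM : (Bᵀ * B).IsHermitian := by
    have := isHermitian_conjTranspose_mul_self B; rwa [conjTranspose_eq_transpose_of_trivial] at this
  set U : Matrix m m ℝ := (hM.eigenvectorUnitary : Matrix m m ℝ) with hUdef
  set μ : m → ℝ := hM.eigenvalues with hμdef
  have hU1 : Uᵀ * U = 1 := by
    have := (Matrix.mem_unitaryGroup_iff').mp hM.eigenvectorUnitary.2
    rwa [Matrix.star_eq_conjTranspose, conjTranspose_eq_transpose_of_trivial] at this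
  have hU2 : U * Uᵀ = 1 := mul_eq_one_comm.mp hU1
  have hspec : Bᵀ * B = U * diagonal μ * Uᵀ := by
    have := hM.spectral_theorem
    simpa [Matrix.star_eq_conjTranspose, conjTranspose_eq_transpose_of_trivial,
      Function.comp] using this
  -- eigenvalue bounds
  have hμ0 : ∀ k, 0 ≤ μ k := fun k => (posSemidef_conjTranspose_mul_self B).eigenvalues_nonneg k
  have hkey : ∀ k, μ k = ∑ i, (B *ᵥ ⇑(hM.eigenvectorBasis k)) i ^ 2 ∧
      ∑ i, (⇑(hM.eigenvectorBasis k)) i ^ 2 = 1 := by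
    intro k
    set u : m → ℝ := ⇑(hM.eigenvectorBasis k) with hu
    have hnorm : ∑ i, u i ^ 2 = 1 := by
      have h1 : ‖hM.eigenvectorBasis k‖ = 1 := hM.eigenvectorBasis.orthonormal.1 k
      rw [EuclideanSpace.norm_eq] at h1
      have h2 := Real.sqrt_eq_one.mp h1
      simpa [sq_abs] using h2
    refine ⟨?_, hnorm⟩
    have heig : (Bᵀ * B) *ᵥ u = μ k • u := hM.mulVec_eigenvectorBasis k
    have h2 : u ⬝ᵥ ((Bᵀ * B) *ᵥ u) = μ k := by
      rw [heig, dotProduct_smul]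
      simp only [smul_eq_mul]
      rw [show u ⬝ᵥ u = ∑ i, u i ^ 2 by simp [dotProduct, sq], hnorm, mul_one]
    rw [← h2, ← mulVec_mulVec, dotProduct_mulVec, vecMul_transpose]
    simp [dotProduct, sq]
  have hμ1 : ∀ k, μ k ≤ 1 := by
    intro k
    obtain ⟨h1, h2⟩ := hkey k
    calc μ k = _ := h1
      _ ≤ spec B ^ 2 * ∑ i, (⇑(hM.eigenvectorBasis k)) i ^ 2 := sq_sum_mulVec_le B _
      _ ≤ 1 := by
          rw [h2, mul_one]
          exact pow_le_one₀ (norm_nonneg _) hB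
  have hμpos : ∀ k, 0 < μ k := by
    intro k
    rcases (hμ0 k).lt_or_eq with h | h
    · exact h
    obtain ⟨h1, h2⟩ := hkey k
    exfalso
    have hz : B *ᵥ ⇑(hM.eigenvectorBasis k) = 0 := by
      funext i
      have hs : ∑ i, (B *ᵥ ⇑(hM.eigenvectorBasis k)) i ^ 2 = 0 := by rw [← h1, ← h]
      have := (Finset.sum_eq_zero_iff_of_nonneg (fun i _ => sq_nonneg _)).mp hs i
        (Finset.mem_univ i)
      exact pow_eq_zero_iff (by norm_num) |>.mp (this)
    have hmem : ⇑(hM.eigenvectorBasis k) ∈ LinearMap.ker B.mulVecLin := by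
      rw [LinearMap.mem_ker, mulVecLin_apply]; exact hz
    rw [hker, Submodule.mem_bot] at hmem
    have := h2
    rw [show (⇑(hM.eigenvectorBasis k) : m → ℝ) = 0 from hmem] at this
    simp at this
  -- construct T
  set g : m → ℝ := fun k => (Real.sqrt (μ k))⁻¹ with hg
  set R : Matrix m m ℝ := U * diagonal g * Uᵀ with hR
  refine ⟨B * R, ?_, ?_⟩
  · have hRt : Rᵀ = R := by
      rw [hR, transpose_mul, transpose_mul, diagonal_transpose, transpose_transpose, mul_assoc]
    rw [transpose_mul, hRt]
    calc R * Bᵀ * (B * R) = R * (Bᵀ * B) * R := by simp only [Matrix.mul_one, Matrix.mul_assoc]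
      _ = U * diagonal g * (Uᵀ * U) * diagonal μ * (Uᵀ * U) * diagonal g * Uᵀ := by
          rw [hspec, hR]; simp only [Matrix.mul_assoc]
      _ = U * (diagonal g * diagonal μ * diagonal g) * Uᵀ := by rw [hU1]; simp only [Matrix.mul_one, Matrix.mul_assoc]
      _ = U * Uᵀ := by
          rw [diagonal_mul_diagonal, diagonal_mul_diagonal]
          congr 1
          rw [show (fun i => g i * μ i * g i) = fun _ => (1:ℝ) from ?_, diagonal_one, mul_one]
          funext i
          have hs : Real.sqrt (μ i) * Real.sqrt (μ i) = μ i := Real.mul_self_sqrt (hμ0 i)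
          have h1 : Real.sqrt (μ i) ≠ 0 := (Real.sqrt_pos.mpr (hμpos i)).ne'
          show (Real.sqrt (μ i))⁻¹ * μ i * (Real.sqrt (μ i))⁻¹ = 1
          field_simp
          try linarith [hs]
      _ = 1 := hU2
  · have hRt : Rᵀ = R := by
      rw [hR, transpose_mul, transpose_mul, diagonal_transpose, transpose_transpose, mul_assoc]
    have h1 : (B * R)ᵀ * B = U * diagonal (fun k => Real.sqrt (μ k)) * Uᵀ := by
      rw [transpose_mul, hRt]
      calc R * Bᵀ * B = R * (Bᵀ * B) := by simp only [Matrix.mul_one, Matrix.mul_assoc]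
        _ = U * diagonal g * (Uᵀ * U) * diagonal μ * Uᵀ := by rw [hspec, hR]; simp only [Matrix.mul_assoc]
        _ = U * (diagonal g * diagonal μ) * Uᵀ := by rw [hU1]; simp only [Matrix.mul_one, Matrix.mul_assoc]
        _ = U * diagonal (fun k => Real.sqrt (μ k)) * Uᵀ := by
            have hfun : (fun i => g i * μ i) = fun k => Real.sqrt (μ k) := by
              funext i
              have hs : Real.sqrt (μ i) * Real.sqrt (μ i) = μ i := Real.mul_self_sqrt (hμ0 i)
              have h1 : Real.sqrt (μ i) ≠ 0 := (Real.sqrt_pos.mpr (hμpos i)).ne'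
              show (Real.sqrt (μ i))⁻¹ * μ i = Real.sqrt (μ i)
              field_simp
              try linarith [hs]
            rw [diagonal_mul_diagonal, hfun]
    have htr : ∀ f : m → ℝ, trace (U * diagonal f * Uᵀ) = ∑ i, f i := by
      intro f
      rw [trace_mul_cycle, hU1, one_mul, trace_diagonal]
    rw [h1, htr, hspec, htr]
    apply Finset.sum_le_sum
    intro i _
    calc μ i = Real.sqrt (μ i * μ i) := (Real.sqrt_mul_self (hμ0 i)).symm
      _ ≤ Real.sqrt (μ i) := Real.sqrt_le_sqrt (by nlinarith [hμ0 i, hμ1 i])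

private lemma dot_sq (v : m → ℝ) : v ⬝ᵥ v = ∑ i, v i ^ 2 := by
  simp [dotProduct, sq]

private lemma key (B : Matrix m m ℝ) (hB : spec B ≤ 1) :
    ∃ T : Matrix m m ℝ, Tᵀ * T = 1 ∧ trace (Bᵀ * B) ≤ trace (Tᵀ * B) := by
  obtain ⟨d, hd⟩ : ∃ d, Module.finrank ℝ (LinearMap.ker B.mulVecLin) = d := ⟨_, rfl⟩
  induction d using Nat.strong_induction_on generalizing B with
  | _ d IH =>
  rcases Nat.eq_zero_or_pos d with h0 | hposd
  · exact key_base B hB (Submodule.finrank_eq_zero.mp (hd.trans h0))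
  have hkerB : LinearMap.ker B.mulVecLin ≠ ⊥ := by
    intro h
    rw [h, finrank_bot] at hd
    omega
  obtain ⟨u, hu, huu⟩ := exists_unit_ker B hkerB
  have hkerBt : LinearMap.ker Bᵀ.mulVecLin ≠ ⊥ := by
    intro h
    have h1 := LinearMap.finrank_range_add_finrank_ker (Bᵀ.mulVecLin)
    have h2 := LinearMap.finrank_range_add_finrank_ker (B.mulVecLin)
    rw [h, finrank_bot] at h1
    have hr : Bᵀ.rank = B.rank := Matrix.rank_transpose B
    rw [Matrix.rank, Matrix.rank] at hr
    omega
  obtain ⟨w, hw, hww⟩ := exists_unit_ker Bᵀ hkerBt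
  have huu' : u ⬝ᵥ u = 1 := by rw [dot_sq]; exact huu
  have hww' : w ⬝ᵥ w = 1 := by rw [dot_sq]; exact hww
  have hwB : ∀ x : m → ℝ, w ⬝ᵥ (B *ᵥ x) = 0 := by
    intro x
    rw [dotProduct_mulVec]
    have hwB0 : w ᵥ* B = 0 := by rw [← mulVec_transpose, hw]
    rw [hwB0, zero_dotProduct]
  set B' : Matrix m m ℝ := B + vecMulVec w u with hB'
  have hz1 : Bᵀ * vecMulVec w u = 0 := by
    rw [_root_.mul_vecMulVec, hw]
    ext i j
    simp [vecMulVec_apply]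
  have hz2 : vecMulVec u w * B = 0 := by
    rw [_root_.vecMulVec_mul, hw]
    ext i j
    simp [vecMulVec_apply]
  have hz3 : vecMulVec u w * vecMulVec w u = vecMulVec u u := by
    rw [_root_.vecMulVec_mul, vecMulVec_transp, _root_.vecMulVec_mulVec, hww', one_smul]
  have hBtB' : B'ᵀ * B' = Bᵀ * B + vecMulVec u u := by
    rw [hB', transpose_add, vecMulVec_transp, add_mul, mul_add, mul_add, hz1, hz2, hz3]
    simp only [add_zero, zero_add]
  have hmv : ∀ v : m → ℝ, B' *ᵥ v = B *ᵥ v + (u ⬝ᵥ v) • w := by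
    intro v
    rw [hB', add_mulVec, _root_.vecMulVec_mulVec]
  have hspecB' : spec B' ≤ 1 := by
    apply spec_le_one_of
    intro v
    rw [← dot_sq, ← dot_sq]
    set α := u ⬝ᵥ v with hα
    set y := v - α • u with hy
    have hBy : B *ᵥ y = B *ᵥ v := by
      rw [hy, mulVec_sub, mulVec_smul, hu, smul_zero, sub_zero]
    have hyy : y ⬝ᵥ y = v ⬝ᵥ v - α ^ 2 := by
      rw [hy]
      simp only [sub_dotProduct, dotProduct_sub, smul_dotProduct, dotProduct_smul, smul_eq_mul,
        huu']
      rw [hα, dotProduct_comm u v]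
      ring
    have hyy0 : 0 ≤ y ⬝ᵥ y := by
      rw [dot_sq]
      positivity
    have hByv : (B *ᵥ v) ⬝ᵥ (B *ᵥ v) ≤ v ⬝ᵥ v - α ^ 2 := by
      rw [← hBy, ← hyy]
      have h1 : ∑ i, (B *ᵥ y) i ^ 2 ≤ spec B ^ 2 * ∑ i, y i ^ 2 := sq_sum_mulVec_le B y
      have h2 : spec B ^ 2 ≤ 1 := pow_le_one₀ (norm_nonneg _) hB
      rw [dot_sq, dot_sq]
      rw [dot_sq] at hyy0
      nlinarith
    calc (B' *ᵥ v) ⬝ᵥ (B' *ᵥ v) = (B *ᵥ v) ⬝ᵥ (B *ᵥ v) + α ^ 2 := by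
          rw [hmv v]
          simp only [add_dotProduct, dotProduct_add, smul_dotProduct, dotProduct_smul,
            smul_eq_mul, hww', hwB v]
          rw [dotProduct_comm (B *ᵥ v) w]
          simp only [hwB v]
          ring
      _ ≤ (v ⬝ᵥ v - α ^ 2) + α ^ 2 := by linarith
      _ = v ⬝ᵥ v := by ring
  have hwne : w ≠ 0 := by
    intro h
    rw [h] at hww'
    simp at hww'
  have hlt : LinearMap.ker B'.mulVecLin < LinearMap.ker B.mulVecLin := by
    refine SetLike.lt_iff_le_and_exists.mpr ⟨?_, u, ?_, ?_⟩
    · intro x hx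
      rw [LinearMap.mem_ker, mulVecLin_apply] at hx ⊢
      rw [hmv x] at hx
      have hux : u ⬝ᵥ x = 0 := by
        have h0 := congrArg (fun z => w ⬝ᵥ z) hx
        simp only [dotProduct_add, dotProduct_smul, smul_eq_mul, dotProduct_zero, hwB x,
          hww', zero_add, mul_one] at h0
        exact h0
      rw [hux, zero_smul, add_zero] at hx
      exact hx
    · rw [LinearMap.mem_ker, mulVecLin_apply]
      exact hu
    · rw [LinearMap.mem_ker, mulVecLin_apply, hmv u, hu, huu', zero_add, one_smul]
      exact hwne
  have hdlt : Module.finrank ℝ (LinearMap.ker B'.mulVecLin) < d :=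
    hd ▸ Submodule.finrank_lt_finrank_of_lt hlt
  obtain ⟨T, hT1, hT2⟩ := IH _ hdlt B' hspecB' rfl
  have hTTt : T * Tᵀ = 1 := mul_eq_one_comm.mp hT1
  have htrB' : trace (Tᵀ * B') = trace (Tᵀ * B) + (Tᵀ *ᵥ w) ⬝ᵥ u := by
    rw [hB', mul_add, trace_add, _root_.mul_vecMulVec, _root_.trace_vecMulVec]
  have hCS : (Tᵀ *ᵥ w) ⬝ᵥ u ≤ 1 := by
    have hnorm : ∑ i, (Tᵀ *ᵥ w) i ^ 2 = 1 := by
      rw [← dot_sq, dotProduct_mulVec, vecMul_transpose, mulVec_mulVec, hTTt, one_mulVec, hww']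
    have hc := Finset.sum_mul_sq_le_sq_mul_sq Finset.univ (fun i => (Tᵀ *ᵥ w) i) u
    have hd' : (Tᵀ *ᵥ w) ⬝ᵥ u = ∑ i, (Tᵀ *ᵥ w) i * u i := rfl
    rw [hd']
    nlinarith [hc, hnorm, huu]
  have htrBB' : trace (B'ᵀ * B') = trace (Bᵀ * B) + 1 := by
    rw [hBtB', trace_add, _root_.trace_vecMulVec, huu']
  refine ⟨T, hT1, ?_⟩
  rw [htrBB', htrB'] at hT2
  linarith

end Helpers

/-- let `H` be an `n×n` orthogonal matrix partitioned into blocks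
`H^{(i,j)}` according to a partition `p : Fin n → Fin q` of `[n]`, with each diagonal
block of spectral norm at most `1`.  Then for each `i` there exists an orthogonal `T`
of the same size as `H^{(i,i)}` with
`‖H^{(i,i)} − T‖_F² ≤ ∑_{j ≠ i} ‖H^{(i,j)}‖_F²`. -/
theorem stmt16 (n q : ℕ) (H : Matrix (Fin n) (Fin n) ℝ) (hH : Hᵀ * H = 1)
    (p : Fin n → Fin q)
    (hdiag : ∀ i : Fin q,
      spec (Matrix.of fun a b : {x : Fin n // p x = i} => H a.1 b.1) ≤ 1) :
    ∀ i : Fin q, ∃ T : Matrix {x : Fin n // p x = i} {x : Fin n // p x = i} ℝ,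
      Tᵀ * T = 1 ∧
      (frob (Matrix.of (fun a b : {x : Fin n // p x = i} => H a.1 b.1) - T)) ^ 2
        ≤ ∑ j ∈ Finset.univ.erase i,
            (frob (Matrix.of fun (a : {x : Fin n // p x = i}) (b : {x : Fin n // p x = j}) =>
              H a.1 b.1)) ^ 2 := by
  intro i
  set B : Matrix {x : Fin n // p x = i} {x : Fin n // p x = i} ℝ :=
    Matrix.of (fun a b : {x : Fin n // p x = i} => H a.1 b.1) with hBdef
  obtain ⟨T, hT1, hT2⟩ := key B (hdiag i)
  refine ⟨T, hT1, ?_⟩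
  have hfrob : ∀ {m' n' : Type} [Fintype m'] [Fintype n'] (A : Matrix m' n' ℝ),
      frob A ^ 2 = ∑ a, ∑ b, A a b ^ 2 := by
    intro m' n' _ _ A
    rw [frob, Real.sq_sqrt (by positivity)]
  -- LHS
  have hT2' : ∑ a, ∑ b, B a b ^ 2 ≤ trace (Tᵀ * B) := by
    rw [← trace_transp_mul_self]
    exact hT2
  have hTsq : ∑ a, ∑ b, T a b ^ 2 = (Fintype.card {x : Fin n // p x = i} : ℝ) := by
    rw [← trace_transp_mul_self, hT1, trace_one]
  have hcross : ∑ a, ∑ b, B a b * T a b = trace (Tᵀ * B) := by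
    rw [trace_transp_mul]
    exact Finset.sum_congr rfl fun a _ => Finset.sum_congr rfl fun b _ => mul_comm _ _
  have hLHS : frob (B - T) ^ 2 = ∑ a, ∑ b, B a b ^ 2 - 2 * trace (Tᵀ * B)
      + (Fintype.card {x : Fin n // p x = i} : ℝ) := by
    calc frob (B - T) ^ 2
        = ∑ a, ∑ b, (B a b ^ 2 - 2 * (B a b * T a b) + T a b ^ 2) := by
          rw [hfrob]
          exact Finset.sum_congr rfl fun a _ => Finset.sum_congr rfl fun b _ => by
            rw [Matrix.sub_apply]; ring
      _ = (∑ a, ∑ b, B a b ^ 2) - 2 * (∑ a, ∑ b, B a b * T a b) + ∑ a, ∑ b, T a b ^ 2 := by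
          simp only [Finset.sum_add_distrib, Finset.sum_sub_distrib, Finset.mul_sum]
      _ = ∑ a, ∑ b, B a b ^ 2 - 2 * trace (Tᵀ * B)
          + (Fintype.card {x : Fin n // p x = i} : ℝ) := by rw [hcross, hTsq]
  -- RHS
  have hrow : ∀ a : {x : Fin n // p x = i}, ∑ b : Fin n, H a.1 b ^ 2 = 1 := by
    intro a
    have hH' : H * Hᵀ = 1 := mul_eq_one_comm.mp hH
    have := congrFun (congrFun hH' a.1) a.1
    simp only [mul_apply, transpose_apply, one_apply_eq] at this
    rw [← this]
    exact Finset.sum_congr rfl fun b _ => sq (H a.1 b)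
  have hfull : ∀ a : {x : Fin n // p x = i},
      ∑ j : Fin q, ∑ b : {x : Fin n // p x = j}, H a.1 b.1 ^ 2 = 1 := by
    intro a
    rw [Fintype.sum_fiberwise p (fun b => H a.1 b ^ 2)]
    exact hrow a
  have hRHS : ∑ j ∈ Finset.univ.erase i,
      (frob (Matrix.of fun (a : {x : Fin n // p x = i}) (b : {x : Fin n // p x = j}) =>
        H a.1 b.1)) ^ 2
      = (Fintype.card {x : Fin n // p x = i} : ℝ) - ∑ a, ∑ b, B a b ^ 2 := by
    have hsplit : ∀ j : Fin q,
        (frob (Matrix.of fun (a : {x : Fin n // p x = i}) (b : {x : Fin n // p x = j}) =>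
          H a.1 b.1)) ^ 2 = ∑ a : {x : Fin n // p x = i}, ∑ b : {x : Fin n // p x = j},
            H a.1 b.1 ^ 2 := fun j => hfrob _
    have htot : ∑ j : Fin q, ∑ a : {x : Fin n // p x = i}, ∑ b : {x : Fin n // p x = j},
        H a.1 b.1 ^ 2 = (Fintype.card {x : Fin n // p x = i} : ℝ) := by
      rw [Finset.sum_comm]
      rw [Finset.sum_congr rfl fun a _ => hfull a]
      simp [Finset.card_univ]
    have herase := Finset.sum_erase_add Finset.univ
      (fun j => ∑ a : {x : Fin n // p x = i}, ∑ b : {x : Fin n // p x = j}, H a.1 b.1 ^ 2)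
      (Finset.mem_univ i)
    rw [Finset.sum_congr rfl fun j _ => hsplit j]
    rw [htot] at herase
    have : ∑ a : {x : Fin n // p x = i}, ∑ b : {x : Fin n // p x = i}, H a.1 b.1 ^ 2
        = ∑ a, ∑ b, B a b ^ 2 := rfl
    linarith [herase]
  rw [hLHS, hRHS]
  linarith
end
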